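/- arXiv:1510.00238 — 5 statements merged into one kernel-verified Lean document; each statement's English description precedes it below -/
import Mathlib

section
/- Let G be a Roelcke-precompact Polish group, K a compact Hausdorff topological group, and φ : G → K a continuous group homomorphism with dense image. Then φ is surjective. (Equivalently: the canonical morphism from a Roelcke-precompact Polish group to its Bohr compactification is surjective.) -/
open Pointwise Filter Set Topology

/-- A topological group is Roelcke-precompact if every nonempty open set `U`
admits a finite set `F` with `U * F * U = G`. -/
def RoelckePrecompact (G : Type*) [Group G] [TopologicalSpace G] : Prop :=
  ∀ U : Set G, U.Nonempty → IsOpen U → ∃ F : Set G, F.Finite ∧ U * F * U = Set.univ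

section Aux
variable {G K : Type*} [Group G] [TopologicalSpace G] [IsTopologicalGroup G]
  [Group K] [TopologicalSpace K] [IsTopologicalGroup K] [CompactSpace K] [T2Space K]

lemma clmul (A B : Set K) : closure A * closure B ⊆ closure (A * B) := by
  rintro x ⟨a, ha, b, hb, rfl⟩
  exact map_mem_closure₂ continuous_mul ha hb (fun x hx y hy => Set.mul_mem_mul hx hy)

lemma sym_nbhd {U : Set G} (hU : U ∈ 𝓝 (1:G)) :
    ∃ V : Set G, IsOpen V ∧ (1:G) ∈ V ∧ V⁻¹ = V ∧ V * V ⊆ U := by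
  obtain ⟨W, hWo, hW1, hWW⟩ := exists_open_nhds_one_mul_subset hU
  refine ⟨W ∩ W⁻¹, hWo.inter (hWo.preimage continuous_inv), ⟨hW1, by simpa using hW1⟩, ?_, ?_⟩
  · rw [Set.inter_inv, inv_inv, Set.inter_comm]
  · exact (Set.mul_subset_mul Set.inter_subset_left Set.inter_subset_left).trans hWW

/-- The key "almost open" lemma: for a Roelcke-precompact `G` and dense `φ`, the closure of the
image of any neighborhood of `1` is a neighborhood of `1` in `K`. -/
lemma dagger (hRP : RoelckePrecompact G) (φ : G →* K) (hdense : DenseRange φ)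
    {V : Set G} (hV : V ∈ 𝓝 (1:G)) :
    (1:K) ∈ interior (closure (φ '' V)) := by
  classical
  obtain ⟨V₁, hV₁o, hV₁1, hV₁s, hV₁⟩ := sym_nbhd hV
  obtain ⟨V₀, hV₀o, hV₀1, hV₀s, hV₀⟩ := sym_nbhd (hV₁o.mem_nhds hV₁1)
  obtain ⟨F, hFfin, hFU⟩ := hRP V₀ ⟨1, hV₀1⟩ hV₀o
  set C : Set K := closure (φ '' V₀) with hC
  have hCc : IsCompact C := isClosed_closure.isCompact
  -- C is symmetric
  have hCsym : ∀ x ∈ C, x⁻¹ ∈ C := by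
    intro x hx
    have h1 : (fun y : K => y⁻¹) '' (φ '' V₀) = φ '' V₀ := by
      ext y
      constructor
      · rintro ⟨z, ⟨g, hg, rfl⟩, rfl⟩
        exact ⟨g⁻¹, by rw [← hV₀s]; exact Set.inv_mem_inv.2 hg, by simp⟩
      · rintro ⟨g, hg, rfl⟩
        refine ⟨φ g⁻¹, ⟨g⁻¹, by rw [← hV₀s]; exact Set.inv_mem_inv.2 hg, rfl⟩, by simp⟩
    have : x⁻¹ ∈ (fun y : K => y⁻¹) '' closure (φ '' V₀) := ⟨x, hx, rfl⟩
    have h2 := (image_closure_subset_closure_image (continuous_inv)) this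
    rwa [h1] at h2
  -- C * C * C * C ⊆ closure (φ '' V)
  have hCCCC : (C * C) * (C * C) ⊆ closure (φ '' V) := by
    have h1 : C * C ⊆ closure (φ '' (V₀ * V₀)) := by
      have := clmul (φ '' V₀) (φ '' V₀)
      rwa [← Set.image_mul φ] at this
    have h2 : (C * C) * (C * C) ⊆ closure (φ '' (V₀ * V₀)) * closure (φ '' (V₀ * V₀)) :=
      Set.mul_subset_mul h1 h1
    refine h2.trans ((clmul _ _).trans ?_)
    rw [← Set.image_mul φ]
    exact closure_mono (Set.image_mono ((Set.mul_subset_mul hV₀ hV₀).trans hV₁))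
  -- by contradiction
  by_contra h1
  have hne : (1:K) ∈ closure (closure (φ '' V))ᶜ := by
    rw [mem_closure_iff_nhds]
    intro t ht
    rw [Set.inter_compl_nonempty_iff]
    intro hsub
    exact h1 (mem_interior_iff_mem_nhds.2 (Filter.mem_of_superset ht hsub))
  have hNB : (𝓝 (1:K) ⊓ 𝓟 (closure (φ '' V))ᶜ).NeBot := mem_closure_iff_clusterPt.1 hne
  set 𝒰 : Ultrafilter K := Ultrafilter.of (𝓝 (1:K) ⊓ 𝓟 (closure (φ '' V))ᶜ) with h𝒰def
  have h𝒰le := Ultrafilter.of_le (𝓝 (1:K) ⊓ 𝓟 (closure (φ '' V))ᶜ)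
  have h𝒰nhds : (𝒰 : Filter K) ≤ 𝓝 (1:K) := h𝒰le.trans inf_le_left
  have h𝒰compl : (closure (φ '' V))ᶜ ∈ 𝒰 :=
    Filter.le_principal_iff.1 (h𝒰le.trans inf_le_right)
  -- covering
  have hcover : (Set.univ : Set K) ⊆ ⋃ f ∈ F, C * {φ f} * C := by
    intro k _
    have hcl : IsClosed (⋃ f ∈ F, C * {φ f} * C) := by
      refine hFfin.isClosed_biUnion (fun f _ => IsCompact.isClosed ?_)
      exact (hCc.mul (isCompact_singleton)).mul hCc
    refine closure_minimal ?_ hcl (hdense k)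
    rintro _ ⟨g, rfl⟩
    have hg : g ∈ V₀ * F * V₀ := by rw [hFU]; trivial
    obtain ⟨uf, huf, w, hw, rfl⟩ := hg
    obtain ⟨u, hu, f, hf, rfl⟩ := huf
    refine Set.mem_biUnion hf ?_
    have : φ (u * f * w) = (φ u) * (φ f) * (φ w) := by simp [map_mul]
    rw [this]
    exact Set.mul_mem_mul (Set.mul_mem_mul (subset_closure ⟨u, hu, rfl⟩) rfl)
      (subset_closure ⟨w, hw, rfl⟩)
  -- pigeonhole along the ultrafilter
  have hU : (⋃ f ∈ F, C * {φ f} * C) ∈ 𝒰 :=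
    Filter.mem_of_superset Filter.univ_mem hcover
  obtain ⟨f, hfF, hfmem⟩ := (Ultrafilter.finite_biUnion_mem_iff hFfin).1 hU
  set T : Set K := (C * {φ f} * C) ∩ (closure (φ '' V))ᶜ with hT
  have hT𝒰 : T ∈ 𝒰 := Filter.inter_mem hfmem h𝒰compl
  -- choice of decompositions
  have hdecomp : ∀ k : K, k ∈ T → ∃ a b : K, a ∈ C ∧ b ∈ C ∧ a * φ f * b = k := by
    rintro k ⟨⟨x, hx, b, hb, rfl⟩, _⟩
    obtain ⟨a, ha, y, hy, rfl⟩ := hx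
    rcases hy with rfl
    exact ⟨a, b, ha, hb, rfl⟩
  choose! a b haC hbC hab using hdecomp
  have haev : ∀ᶠ k in (𝒰 : Filter K), a k ∈ C := Filter.mem_of_superset hT𝒰 (fun k hk => haC k hk)
  have hbev : ∀ᶠ k in (𝒰 : Filter K), b k ∈ C := Filter.mem_of_superset hT𝒰 (fun k hk => hbC k hk)
  obtain ⟨a₀, ha₀C, ha₀⟩ := hCc.ultrafilter_le_nhds (𝒰.map a)
    (Filter.le_principal_iff.2 (by exact haev))
  obtain ⟨b₀, hb₀C, hb₀⟩ := hCc.ultrafilter_le_nhds (𝒰.map b)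
    (Filter.le_principal_iff.2 (by exact hbev))
  have hta : Filter.Tendsto a (𝒰 : Filter K) (𝓝 a₀) := ha₀
  have htb : Filter.Tendsto b (𝒰 : Filter K) (𝓝 b₀) := hb₀
  have htprod : Filter.Tendsto (fun k => a k * φ f * b k) (𝒰 : Filter K)
      (𝓝 (a₀ * φ f * b₀)) := ((hta.mul tendsto_const_nhds).mul htb)
  have htid : Filter.Tendsto (fun k : K => k) (𝒰 : Filter K) (𝓝 (a₀ * φ f * b₀)) := by
    refine htprod.congr' ?_
    filter_upwards [hT𝒰] with k hk using hab k hk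
  have h1eq : a₀ * φ f * b₀ = 1 := tendsto_nhds_unique htid (le_trans h𝒰nhds le_rfl)
  have hφf : φ f = a₀⁻¹ * b₀⁻¹ := by
    have h := congrArg (fun x => a₀⁻¹ * x * b₀⁻¹) h1eq
    calc φ f = a₀⁻¹ * (a₀ * φ f * b₀) * b₀⁻¹ := by group
    _ = a₀⁻¹ * 1 * b₀⁻¹ := by rw [h1eq]
    _ = a₀⁻¹ * b₀⁻¹ := by group
  obtain ⟨k₀, hk₀⟩ := Ultrafilter.nonempty_of_mem hT𝒰
  have h0 := hab k₀ hk₀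
  rw [hφf] at h0
  have hkdec : (a k₀ * a₀⁻¹) * (b₀⁻¹ * b k₀) = k₀ := by
    conv_rhs => rw [← h0]
    group
  have hkmem : k₀ ∈ closure (φ '' V) := by
    rw [← hkdec]
    exact hCCCC (Set.mul_mem_mul
      (Set.mul_mem_mul (haC k₀ hk₀) (hCsym a₀ ha₀C))
      (Set.mul_mem_mul (hCsym b₀ hb₀C) (hbC k₀ hk₀)))
  exact hk₀.2 hkmem

end Aux
/-- Any continuous homomorphism with dense image from a Roelcke-precompact Polish group
to a compact Hausdorff group is surjective; in particular the morphism to the Bohr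
compactification is surjective. -/
theorem stmt_3 (G K : Type*) [Group G] [TopologicalSpace G] [IsTopologicalGroup G]
    [PolishSpace G] (hRP : RoelckePrecompact G)
    [Group K] [TopologicalSpace K] [IsTopologicalGroup K] [CompactSpace K] [T2Space K]
    (φ : G →* K) (hφ : Continuous φ) (hdense : DenseRange φ) :
    Function.Surjective φ := by
  classical
  letI := TopologicalSpace.upgradeIsCompletelyMetrizable G
  obtain ⟨Γ, hΓc, hΓd⟩ := TopologicalSpace.exists_countable_dense G
  haveI : Countable ↥Γ := hΓc.to_subtype
  -- === the tower of symmetric neighborhoods ===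
  have hstep : ∀ W : Set G, ∀ n : ℕ, IsOpen W → (1:G) ∈ W →
      ∃ V' : Set G, IsOpen V' ∧ (1:G) ∈ V' ∧ V'⁻¹ = V' ∧
        V' * V' ⊆ W ∩ Metric.ball 1 (1/(n+1)) := by
    intro W n hWo hW1
    have hmem : W ∩ Metric.ball 1 (1/(n+1)) ∈ 𝓝 (1:G) :=
      Filter.inter_mem (hWo.mem_nhds hW1) (Metric.ball_mem_nhds _ (by positivity))
    exact sym_nbhd hmem
  choose! Vf hVfo hVf1 hVfs hVfsub using hstep
  set V : ℕ → Set G := fun n =>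
    Nat.rec (motive := fun _ => Set G) Set.univ (fun n Vn => Vf Vn n) n with hVdef
  have hVsucc : ∀ n, V (n+1) = Vf (V n) n := fun n => rfl
  have hVprops : ∀ n, IsOpen (V n) ∧ (1:G) ∈ V n := by
    intro n; induction n with
    | zero => exact ⟨isOpen_univ, trivial⟩
    | succ n ih => rw [hVsucc]; exact ⟨hVfo _ n ih.1 ih.2, hVf1 _ n ih.1 ih.2⟩
  have hVo : ∀ n, IsOpen (V n) := fun n => (hVprops n).1
  have hV1 : ∀ n, (1:G) ∈ V n := fun n => (hVprops n).2
  have hVs : ∀ n, (V (n+1))⁻¹ = V (n+1) := fun n => by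
    rw [hVsucc]; exact hVfs _ n (hVo n) (hV1 n)
  have hVsq : ∀ n, V (n+1) * V (n+1) ⊆ V n := fun n => by
    rw [hVsucc]
    exact (hVfsub _ n (hVo n) (hV1 n)).trans Set.inter_subset_left
  have hVball : ∀ n, V (n+1) ⊆ Metric.ball 1 (1/(n+1)) := by
    intro n x hx
    have h2 : x * x ∈ V (n+1) * V (n+1) := Set.mul_mem_mul hx hx
    have hx1 : x * 1 ∈ V (n+1) * V (n+1) := Set.mul_mem_mul hx (hV1 (n+1))
    rw [hVsucc] at hx1
    exact ((hVfsub _ n (hVo n) (hV1 n)).trans Set.inter_subset_right) (by simpa using hx1)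
  have hVsub : ∀ n, V (n+1) ⊆ V n := by
    intro n x hx
    have hx1 : x * 1 ∈ V (n+1) * V (n+1) := Set.mul_mem_mul hx (hV1 (n+1))
    rw [mul_one] at hx1
    exact hVsq n hx1
  have hVmono : ∀ m n, m ≤ n → V n ⊆ V m := by
    intro m n hmn
    induction n with
    | zero => rw [Nat.le_zero.1 hmn]
    | succ n ih =>
      rcases Nat.lt_or_ge m (n+1) with h | h
      · exact (hVsub n).trans (ih (Nat.lt_succ_iff.1 h))
      · have : m = n + 1 := le_antisymm hmn h
        rw [this]
  have hVnhds : ∀ n, V n ∈ 𝓝 (1:G) := fun n => (hVo n).mem_nhds (hV1 n)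
  have hVbasis : ∀ N : Set G, N ∈ 𝓝 (1:G) → ∃ n, V n ⊆ N := by
    intro N hN
    obtain ⟨ε, hε, hball⟩ := Metric.mem_nhds_iff.1 hN
    obtain ⟨n, hn⟩ := exists_nat_one_div_lt hε
    refine ⟨n+1, (hVball n).trans ((Metric.ball_subset_ball hn.le).trans hball)⟩
  -- === cells ===
  set cell : ℕ → G → Set G := fun m γ => V m * {γ} * V m with hcelldef
  have cell_mem : ∀ (m : ℕ) (γ u w : G), u ∈ V m → w ∈ V m → u * γ * w ∈ cell m γ := by
    intro m γ u w hu hw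
    exact Set.mul_mem_mul (Set.mul_mem_mul hu rfl) hw
  have γcell : ∀ (m : ℕ) (γ : G), γ ∈ cell m γ := by
    intro m γ
    have := cell_mem m γ 1 1 (hV1 m) (hV1 m)
    simpa using this
  have cell_dest : ∀ (m : ℕ) (γ x : G), x ∈ cell m γ →
      ∃ u ∈ V m, ∃ w ∈ V m, x = u * γ * w := by
    intro m γ x hx
    obtain ⟨uγ, huγ, w, hw, rfl⟩ := hx
    obtain ⟨u, hu, y, hy, rfl⟩ := huγ
    rcases hy with rfl
    exact ⟨u, hu, w, hw, rfl⟩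
  have cell_sub : ∀ {m m' : ℕ} {γ : G}, m ≤ m' → cell m' γ ⊆ cell m γ := by
    intro m m' γ h
    exact Set.mul_subset_mul (Set.mul_subset_mul (hVmono m m' h) subset_rfl) (hVmono m m' h)
  -- neighborhoods of an arbitrary point contain cells
  have hcellbasis : ∀ (h : G) (O : Set G), IsOpen O → h ∈ O → ∃ M, cell M h ⊆ O := by
    intro h O hOo hhO
    have hcont : Continuous (fun p : G × G => p.1 * h * p.2) := by continuity
    have hpre : (fun p : G × G => p.1 * h * p.2) ⁻¹' O ∈ 𝓝 ((1,1) : G × G) := by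
      refine hcont.continuousAt.preimage_mem_nhds ?_
      simpa using hOo.mem_nhds hhO
    rw [nhds_prod_eq, Filter.mem_prod_iff] at hpre
    obtain ⟨A, hA, B, hB, hAB⟩ := hpre
    obtain ⟨n₁, hn₁⟩ := hVbasis A hA
    obtain ⟨n₂, hn₂⟩ := hVbasis B hB
    refine ⟨max n₁ n₂, ?_⟩
    intro x hx
    obtain ⟨u, hu, w, hw, rfl⟩ := cell_dest _ _ _ hx
    exact hAB (Set.mk_mem_prod (hn₁ (hVmono _ _ (le_max_left _ _) hu))
      (hn₂ (hVmono _ _ (le_max_right _ _) hw)))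
  -- === smallness ===
  set Small : Set G → ℝ → Prop := fun S ε => ∀ x ∈ S, ∀ y ∈ S, dist x y ≤ ε with hSmalldef
  -- === Lemma A : refinement cells exist inside any nonempty open set ===
  have lemA : ∀ (O : Set G), IsOpen O → O.Nonempty → ∀ ε : ℝ, 0 < ε →
      ∃ (m : ℕ) (γ : G), γ ∈ Γ ∧ cell m γ ⊆ O ∧ Small (cell m γ) ε := by
    intro O hOo hOne ε hε
    obtain ⟨h, hhO⟩ := hOne
    have hO' : IsOpen (O ∩ Metric.ball h (ε/3)) := hOo.inter Metric.isOpen_ball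
    have hhO' : h ∈ O ∩ Metric.ball h (ε/3) := ⟨hhO, Metric.mem_ball_self (by positivity)⟩
    obtain ⟨M, hM⟩ := hcellbasis h _ hO' hhO'
    -- pick γ ∈ Γ in the open set V (M+2) * {h}
    have hopen2 : IsOpen (V (M+2) * {h}) := (hVo (M+2)).mul_right
    have hne2 : (V (M+2) * {h}).Nonempty := ⟨1 * h, Set.mul_mem_mul (hV1 (M+2)) rfl⟩
    obtain ⟨γ, hγΓ, hγmem⟩ := hΓd.exists_mem_open hopen2 hne2
    -- γ = u * h with u ∈ V (M+2)
    obtain ⟨u, hu, y, hy, hγeq⟩ := hγmem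
    rw [Set.mem_singleton_iff] at hy
    rw [hy] at hγeq
    beta_reduce at hγeq
    refine ⟨M+1, γ, hγΓ, ?_, ?_⟩
    · -- cell (M+1) γ ⊆ cell M h ⊆ O'
      have hsub : cell (M+1) γ ⊆ cell M h := by
        intro x hx
        obtain ⟨vy, hvy, w, hw, rfl⟩ := hx
        obtain ⟨v, hv, y2, hy2, rfl⟩ := hvy
        rw [Set.mem_singleton_iff] at hy2
        subst hy2
        beta_reduce
        rw [← hγeq]
        have : v * (u * h) * w = (v * u) * h * w := by group
        rw [this]
        exact cell_mem M h (v*u) w (hVsq M (Set.mul_mem_mul hv (hVsub (M+1) hu)))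
          (hVsub M hw)
      exact hsub.trans (hM.trans Set.inter_subset_left)
    · -- smallness
      intro x hx y hy
      have hx' : x ∈ Metric.ball h (ε/3) := by
        have hsub : cell (M+1) γ ⊆ cell M h := by
          intro z hz
          obtain ⟨vy, hvy, w, hw, rfl⟩ := hz
          obtain ⟨v, hv, y2, hy2, rfl⟩ := hvy
          rw [Set.mem_singleton_iff] at hy2
          subst hy2
          beta_reduce
          rw [← hγeq]
          have : v * (u * h) * w = (v * u) * h * w := by group
          rw [this]
          exact cell_mem M h (v*u) w (hVsq M (Set.mul_mem_mul hv (hVsub (M+1) hu)))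
            (hVsub M hw)
        exact (hsub.trans (hM.trans Set.inter_subset_right)) hx
      have hy' : y ∈ Metric.ball h (ε/3) := by
        have hsub : cell (M+1) γ ⊆ cell M h := by
          intro z hz
          obtain ⟨vy, hvy, w, hw, rfl⟩ := hz
          obtain ⟨v, hv, y2, hy2, rfl⟩ := hvy
          rw [Set.mem_singleton_iff] at hy2
          subst hy2
          beta_reduce
          rw [← hγeq]
          have : v * (u * h) * w = (v * u) * h * w := by group
          rw [this]
          exact cell_mem M h (v*u) w (hVsq M (Set.mul_mem_mul hv (hVsub (M+1) hu)))
            (hVsub M hw)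
        exact (hsub.trans (hM.trans Set.inter_subset_right)) hy
      have := dist_triangle x h y
      rw [Metric.mem_ball] at hx' hy'
      rw [dist_comm h y] at this
      linarith
  -- === dagger for the basis sets ===
  have hdag : ∀ m : ℕ, (1:K) ∈ interior (closure (φ '' V m)) :=
    fun m => dagger hRP φ hdense (hVnhds m)
  have cell_open : ∀ (m : ℕ) (γ : G), IsOpen (cell m γ) := fun m γ => (hVo m).mul_left
  have himgcell : ∀ (m : ℕ) (γ : G), φ '' cell m γ = (φ '' V m) * {φ γ} * (φ '' V m) := by
    intro m γ
    show φ '' (V m * {γ} * V m) = _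
    rw [Set.image_mul φ, Set.image_mul φ, Set.image_singleton]
  -- === Lemma C ===
  have lemC : ∀ (m : ℕ) (γ : G),
      (interior (closure (φ '' V m))) * {φ γ} * (interior (closure (φ '' V m)))
        ⊆ closure (φ '' cell m γ) := by
    intro m γ
    have h1 : (interior (closure (φ '' V m))) * {φ γ} * (interior (closure (φ '' V m)))
        ⊆ (closure (φ '' V m)) * closure ({φ γ} : Set K) * (closure (φ '' V m)) :=
      Set.mul_subset_mul (Set.mul_subset_mul interior_subset subset_closure) interior_subset
    refine h1.trans ?_
    have h3 : closure (φ '' V m) * closure ({φ γ} : Set K) * closure (φ '' V m)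
        ⊆ closure ((φ '' V m) * {φ γ}) * closure (φ '' V m) :=
      Set.mul_subset_mul (clmul _ _) subset_rfl
    refine h3.trans ((clmul _ _).trans ?_)
    rw [himgcell]
  -- === BAD sets ===
  set BAD : ℕ → G → ℕ → Set K := fun m γ n =>
    {k | k ∈ closure (φ '' cell m γ) ∧ ∀ m' : ℕ, ∀ γ' ∈ Γ,
      (cell m' γ' ⊆ cell m γ ∧ Small (cell m' γ') (1/(n+1))) →
        k ∉ closure (φ '' cell m' γ')} with hBADdef
  have hBADnwd : ∀ (m : ℕ) (γ : G) (n : ℕ), IsNowhereDense (BAD m γ n) := by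
    intro m γ n
    rw [IsNowhereDense]
    by_contra hne
    have hQne : (interior (closure (BAD m γ n))).Nonempty := Set.nonempty_iff_ne_empty.2 hne
    set Q := interior (closure (BAD m γ n)) with hQ
    have hQo : IsOpen Q := isOpen_interior
    have hdenseB : ∀ P : Set K, IsOpen P → P.Nonempty → P ⊆ Q → (P ∩ BAD m γ n).Nonempty := by
      intro P hPo hPne hPQ
      obtain ⟨p, hp⟩ := hPne
      have hpcl : p ∈ closure (BAD m γ n) := interior_subset (hPQ hp)
      rw [mem_closure_iff] at hpcl
      exact hpcl P hPo hp
    obtain ⟨k', hk'Q, hk'B⟩ := hdenseB Q hQo hQne subset_rfl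
    have hk'cl : k' ∈ closure (φ '' cell m γ) := hk'B.1
    rw [mem_closure_iff] at hk'cl
    obtain ⟨y, hyQ, hyimg⟩ := hk'cl Q hQo hk'Q
    obtain ⟨h, hhcell, rfl⟩ := hyimg
    set O := cell m γ ∩ φ ⁻¹' Q with hOdef
    have hOo : IsOpen O := (cell_open m γ).inter (hQo.preimage hφ)
    have hOne : O.Nonempty := ⟨h, hhcell, hyQ⟩
    obtain ⟨m', γ', hγ'Γ, hsub', hsmall'⟩ := lemA O hOo hOne (1/(n+1)) (by positivity)
    set W := interior (closure (φ '' V m')) with hWdef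
    have hPo : IsOpen ((W * {φ γ'} * W) ∩ Q) :=
      (IsOpen.mul_left isOpen_interior).inter hQo
    have hPne : ((W * {φ γ'} * W) ∩ Q).Nonempty := by
      refine ⟨φ γ', ?_, ?_⟩
      · have h1 : (1:K) * φ γ' * 1 ∈ W * {φ γ'} * W :=
          Set.mul_mem_mul (Set.mul_mem_mul (hdag m') (rfl : φ γ' ∈ ({φ γ'} : Set K))) (hdag m')
        rw [mul_one, one_mul] at h1
        exact h1
      · exact (hsub' (γcell m' γ')).2
    obtain ⟨ks, hksP, hksB⟩ := hdenseB _ hPo hPne Set.inter_subset_right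
    have hkscl : ks ∈ closure (φ '' cell m' γ') := lemC m' γ' hksP.1
    exact hksB.2 m' γ' hγ'Γ ⟨hsub'.trans Set.inter_subset_left, hsmall'⟩ hkscl
  -- === the union of all BAD sets is meagre ===
  set BADU : Set K := ⋃ (p : ℕ × ℕ × ↥Γ), BAD p.1 (p.2.2 : G) p.2.1 with hBADUdef
  have hBADUm : IsMeagre BADU := by
    rw [IsMeagre, hBADUdef, Set.compl_iUnion]
    refine (countable_iInter_mem).2 (fun p => ?_)
    have hnwd := hBADnwd p.1 (p.2.2 : G) p.2.1
    have hdd : Dense ((closure (BAD p.1 (p.2.2 : G) p.2.1))ᶜ) :=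
      interior_eq_empty_iff_dense_compl.1 hnwd
    refine Filter.mem_of_superset
      (residual_of_dense_open isClosed_closure.isOpen_compl hdd) ?_
    exact Set.compl_subset_compl.2 subset_closure
  -- === every point outside BADU is in the range ===
  have hGOOD : BADUᶜ ⊆ Set.range φ := by
    intro k hk
    -- starting cell
    have hstart : ∃ γ₀, γ₀ ∈ Γ ∧ k ∈ closure (φ '' cell 1 γ₀) := by
      obtain ⟨F, hFfin, hFU⟩ := hRP (V 2) ⟨1, hV1 2⟩ (hVo 2)
      have hcover : (Set.univ : Set K) ⊆ ⋃ f ∈ F, closure (φ '' cell 2 f) := by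
        intro x _
        have hcl : IsClosed (⋃ f ∈ F, closure (φ '' cell 2 f)) :=
          hFfin.isClosed_biUnion (fun f _ => isClosed_closure)
        refine closure_minimal ?_ hcl (hdense x)
        rintro _ ⟨g, rfl⟩
        have hg : g ∈ V 2 * F * V 2 := by rw [hFU]; trivial
        obtain ⟨uf, huf, w, hw, rfl⟩ := hg
        obtain ⟨u, hu, f, hf, rfl⟩ := huf
        exact Set.mem_biUnion hf (subset_closure ⟨u*f*w, cell_mem 2 f u w hu hw, rfl⟩)
      obtain ⟨f, hfF, hkf⟩ := Set.mem_iUnion₂.1 (hcover (Set.mem_univ k))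
      -- replace f by an element of Γ
      have hopen3 : IsOpen (V 3 * {f}) := (hVo 3).mul_right
      have hne3 : (V 3 * {f}).Nonempty := ⟨1 * f, Set.mul_mem_mul (hV1 3) rfl⟩
      obtain ⟨γ₀, hγ₀Γ, hγ₀mem⟩ := hΓd.exists_mem_open hopen3 hne3
      obtain ⟨u, hu, y, hy, hγ₀eq⟩ := hγ₀mem
      rw [Set.mem_singleton_iff] at hy
      rw [hy] at hγ₀eq
      beta_reduce at hγ₀eq
      refine ⟨γ₀, hγ₀Γ, ?_⟩
      refine closure_mono (Set.image_mono ?_) hkf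
      -- cell 2 f ⊆ cell 1 γ₀
      intro z hz
      obtain ⟨vy, hvy, w, hw, rfl⟩ := hz
      obtain ⟨v, hv, y2, hy2, rfl⟩ := hvy
      rw [Set.mem_singleton_iff] at hy2
      beta_reduce
      rw [hy2]
      have hfeq : f = u⁻¹ * γ₀ := by rw [← hγ₀eq]; group
      rw [hfeq]
      have heq2 : v * (u⁻¹ * γ₀) * w = (v * u⁻¹) * γ₀ * w := by group
      rw [heq2]
      refine cell_mem 1 γ₀ (v * u⁻¹) w ?_ (hVsub 1 hw)
      have hu' : u⁻¹ ∈ V 3 := by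
        have h3 : (V 3)⁻¹ = V 3 := hVs 2
        rw [← h3]
        exact Set.inv_mem_inv.2 hu
      exact hVsq 1 (Set.mul_mem_mul hv (hVsub 2 hu'))
    obtain ⟨γ₀, hγ₀Γ, hk₀⟩ := hstart
    -- refinement step
    have hstep2 : ∀ (m : ℕ) (γ : G) (j : ℕ), γ ∈ Γ → k ∈ closure (φ '' cell m γ) →
        ∃ (m' : ℕ) (γ' : G), γ' ∈ Γ ∧ cell m' γ' ⊆ cell m γ ∧
          Small (cell m' γ') (1/(j+1)) ∧ k ∈ closure (φ '' cell m' γ') := by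
      intro m γ j hγΓ hkcl
      by_contra hcon
      push_neg at hcon
      refine hk ?_
      rw [hBADUdef]
      refine Set.mem_iUnion.2 ⟨(m, j, ⟨γ, hγΓ⟩), ?_⟩
      refine ⟨hkcl, ?_⟩
      intro m' γ' hγ' href hkcl'
      exact (hcon m' γ' hγ' href.1 href.2) hkcl'
    choose! mf γf hγfΓ hsubf hsmallf hclf using hstep2
    set seq : ℕ → ℕ × G := fun j => Nat.rec (motive := fun _ => ℕ × G) (1, γ₀)
      (fun j p => (mf p.1 p.2 j, γf p.1 p.2 j)) j with hseqdef
    have hseqS : ∀ j, seq (j+1) = (mf (seq j).1 (seq j).2 j, γf (seq j).1 (seq j).2 j) :=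
      fun j => rfl
    have hinv : ∀ j, (seq j).2 ∈ Γ ∧ k ∈ closure (φ '' cell (seq j).1 (seq j).2) := by
      intro j; induction j with
      | zero => exact ⟨hγ₀Γ, hk₀⟩
      | succ j ih =>
        rw [hseqS]
        exact ⟨hγfΓ _ _ j ih.1 ih.2, hclf _ _ j ih.1 ih.2⟩
    have hsub2 : ∀ j, cell (seq (j+1)).1 (seq (j+1)).2 ⊆ cell (seq j).1 (seq j).2 := by
      intro j; rw [hseqS]; exact hsubf _ _ j (hinv j).1 (hinv j).2
    have hsmall2 : ∀ j, Small (cell (seq (j+1)).1 (seq (j+1)).2) (1/(j+1)) := by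
      intro j; rw [hseqS]; exact hsmallf _ _ j (hinv j).1 (hinv j).2
    have hchain : ∀ i j, i ≤ j → cell (seq j).1 (seq j).2 ⊆ cell (seq i).1 (seq i).2 := by
      intro i j hij
      induction j with
      | zero => rw [Nat.le_zero.1 hij]
      | succ j ih =>
        rcases Nat.lt_or_ge i (j+1) with hlt | hge
        · exact (hsub2 j).trans (ih (Nat.lt_succ_iff.1 hlt))
        · rw [le_antisymm hij hge]
    set g : ℕ → G := fun j => (seq j).2 with hgdef
    have hgcell : ∀ j, g j ∈ cell (seq j).1 (seq j).2 := fun j => γcell _ _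
    have hcauchy : CauchySeq g := by
      rw [Metric.cauchySeq_iff]
      intro ε hε
      obtain ⟨N, hN⟩ := exists_nat_one_div_lt hε
      refine ⟨N+1, fun p hp q hq => ?_⟩
      have hp' : g p ∈ cell (seq (N+1)).1 (seq (N+1)).2 := hchain (N+1) p hp (hgcell p)
      have hq' : g q ∈ cell (seq (N+1)).1 (seq (N+1)).2 := hchain (N+1) q hq (hgcell q)
      have hle := hsmall2 N (g p) hp' (g q) hq'
      calc dist (g p) (g q) ≤ 1/(N+1) := hle
      _ < ε := hN
    obtain ⟨x, hx⟩ := cauchySeq_tendsto_of_complete hcauchy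
    refine ⟨x, ?_⟩
    -- φ x ∈ closure Wo for every open Wo ∋ k
    have hph : ∀ Wo : Set K, IsOpen Wo → k ∈ Wo → φ x ∈ closure Wo := by
      intro Wo hWoo hkWo
      have hnear : ∀ j : ℕ, ∃ h, h ∈ cell (seq (j+1)).1 (seq (j+1)).2 ∧ φ h ∈ Wo := by
        intro j
        have hcl := (hinv (j+1)).2
        rw [mem_closure_iff] at hcl
        obtain ⟨y, hyW, hyimg⟩ := hcl Wo hWoo hkWo
        obtain ⟨h, hh, rfl⟩ := hyimg
        exact ⟨h, hh, hyW⟩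
      choose hj hhj hφhj using hnear
      have hdist0 : Filter.Tendsto (fun j : ℕ => dist (hj j) x) Filter.atTop (𝓝 0) := by
        have hgx : Filter.Tendsto (fun j : ℕ => dist (g (j+1)) x) Filter.atTop (𝓝 0) := by
          have h1 : Filter.Tendsto (fun j : ℕ => g (j+1)) Filter.atTop (𝓝 x) :=
            hx.comp (Filter.tendsto_add_atTop_nat 1)
          rwa [tendsto_iff_dist_tendsto_zero] at h1
        have hb : ∀ j : ℕ, dist (hj j) x ≤ 1/(j+1) + dist (g (j+1)) x := by
          intro j
          have htri := dist_triangle (hj j) (g (j+1)) x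
          have hsm := hsmall2 j (hj j) (hhj j) (g (j+1)) (hgcell (j+1))
          linarith
        have hlim : Filter.Tendsto (fun j : ℕ => 1/((j:ℝ)+1) + dist (g (j+1)) x)
            Filter.atTop (𝓝 (0 + 0)) :=
          Filter.Tendsto.add tendsto_one_div_add_atTop_nhds_zero_nat hgx
        rw [add_zero] at hlim
        exact squeeze_zero (fun j => dist_nonneg) hb hlim
      have htend : Filter.Tendsto hj Filter.atTop (𝓝 x) :=
        tendsto_iff_dist_tendsto_zero.2 hdist0
      have hxcl : x ∈ closure (φ ⁻¹' Wo) :=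
        mem_closure_of_tendsto htend (Filter.Eventually.of_forall (fun j => hφhj j))
      have himg : φ x ∈ closure (φ '' (φ ⁻¹' Wo)) :=
        (image_closure_subset_closure_image hφ) ⟨x, hxcl, rfl⟩
      exact closure_mono (Set.image_preimage_subset φ Wo) himg
    -- conclude φ x = k
    by_contra hne2
    have hmem : ({φ x}ᶜ : Set K) ∈ 𝓝 k := by
      refine IsOpen.mem_nhds isOpen_compl_singleton ?_
      simp only [Set.mem_compl_iff, Set.mem_singleton_iff]
      exact fun h => hne2 h.symm
    obtain ⟨C, hCmem, hCclosed, hCsub⟩ := exists_mem_nhds_isClosed_subset hmem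
    have hk_int : k ∈ interior C := mem_interior_iff_mem_nhds.2 hCmem
    have hφxC : φ x ∈ C :=
      (closure_minimal interior_subset hCclosed) (hph (interior C) isOpen_interior hk_int)
    exact (hCsub hφxC) rfl
  -- === conclusion: surjectivity ===
  intro k₀
  have hres : Set.range φ ∈ residual K := by
    have h1 : IsMeagre ((Set.range φ)ᶜ) := hBADUm.mono (Set.compl_subset_comm.2 hGOOD)
    rw [IsMeagre, compl_compl] at h1
    exact h1
  have hres2 : (fun y : K => k₀⁻¹ * y) ⁻¹' (Set.range φ) ∈ residual K := by
    have h1 : IsMeagre ((Set.range φ)ᶜ) := hBADUm.mono (Set.compl_subset_comm.2 hGOOD)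
    have h2 : IsMeagre ((fun y : K => k₀⁻¹ * y) ⁻¹' (Set.range φ)ᶜ) :=
      h1.preimage_of_isOpenMap (continuous_const.mul continuous_id)
        (Homeomorph.mulLeft k₀⁻¹).isOpenMap
    rw [Set.preimage_compl] at h2
    rw [IsMeagre, compl_compl] at h2
    exact h2
  have hne : (Set.range φ ∩ (fun y : K => k₀⁻¹ * y) ⁻¹' (Set.range φ)).Nonempty :=
    Dense.nonempty (dense_of_mem_residual (Filter.inter_mem hres hres2))
  obtain ⟨y, ⟨g₁, hg₁⟩, hyL⟩ := hne
  obtain ⟨g₂, hg₂⟩ := hyL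
  refine ⟨g₁ * g₂⁻¹, ?_⟩
  have : φ g₁ = y := hg₁
  have hg₂' : φ g₂ = k₀⁻¹ * y := hg₂
  rw [map_mul, map_inv, this, hg₂']
  group
end

section
/- Let G be a Polish group and H ≤ G a closed subgroup, and let G/H be the space of left cosets with the quotient topology, on which G acts by left translation. Then the following are equivalent: (1) there exists a metric on G/H inducing the quotient topology which is invariant under the G-action (d(g·x, g·y) = d(x,y) for all g ∈ G, x, y ∈ G/H); (2) for every open neighborhood U of the identity in G there exists an open neighborhood V of the identity such that V·H ⊆ H·U. -/
open Pointwise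

open Set Filter NNReal Topology

section Aux

variable {G : Type*} [Group G] {H : Subgroup G}

/-- The bi-`H`-invariant "entourage" predicate: `h*z ∈ W*H` and `z*h ∈ H*W` for all `h ∈ H`. -/
def PW (H : Subgroup G) (W : Set G) (z : G) : Prop :=
  (∀ h, h ∈ H → h * z ∈ W * (H : Set G)) ∧
  (∀ h, h ∈ H → z * h ∈ (H : Set G) * W)

theorem mem_H_mul {W : Set G} {h w : G} (hh : h ∈ H) (hw : w ∈ W) :
    h * w ∈ (H : Set G) * W :=
  Set.mem_mul.2 ⟨h, SetLike.mem_coe.2 hh, w, hw, rfl⟩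

theorem mem_mul_H {W : Set G} {h w : G} (hh : h ∈ H) (hw : w ∈ W) :
    w * h ∈ W * (H : Set G) :=
  Set.mem_mul.2 ⟨w, hw, h, SetLike.mem_coe.2 hh, rfl⟩

theorem exists_of_mem_mul_H {W : Set G} {z : G} (hz : z ∈ W * (H : Set G)) :
    ∃ w ∈ W, ∃ h ∈ H, z = w * h := by
  obtain ⟨w, hw, h, hh, he⟩ := Set.mem_mul.1 hz
  exact ⟨w, hw, h, SetLike.mem_coe.1 hh, he.symm⟩

theorem exists_of_mem_H_mul {W : Set G} {z : G} (hz : z ∈ (H : Set G) * W) :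
    ∃ h ∈ H, ∃ w ∈ W, z = h * w := by
  obtain ⟨h, hh, w, hw, he⟩ := Set.mem_mul.1 hz
  exact ⟨h, SetLike.mem_coe.1 hh, w, hw, he.symm⟩

theorem PW_one {W : Set G} (h1 : (1 : G) ∈ W) : PW H W 1 := by
  constructor
  · intro h hh
    have := mem_mul_H (W := W) hh h1
    simpa using this
  · intro h hh
    have := mem_H_mul (W := W) hh h1
    simpa using this

theorem PW_mono {W W' : Set G} (hWW' : W ⊆ W') {z : G} (hz : PW H W z) : PW H W' z := by
  refine ⟨fun h hh => ?_, fun h hh => ?_⟩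
  · exact Set.mul_subset_mul hWW' subset_rfl (hz.1 h hh)
  · exact Set.mul_subset_mul subset_rfl hWW' (hz.2 h hh)

theorem PW_inv {W : Set G} (hW : W⁻¹ = W) {z : G} (hz : PW H W z) : PW H W z⁻¹ := by
  have hWmem : ∀ {w : G}, w ∈ W → w⁻¹ ∈ W := by
    intro w hw; rw [← hW]; simpa using hw
  constructor
  · intro h hh
    obtain ⟨h', hh', w, hw, he⟩ := exists_of_mem_H_mul (hz.2 h⁻¹ (inv_mem hh))
    have : h * z⁻¹ = w⁻¹ * h'⁻¹ := by
      have : z * h⁻¹ = h' * w := he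
      calc h * z⁻¹ = (z * h⁻¹)⁻¹ := by group
      _ = (h' * w)⁻¹ := by rw [this]
      _ = w⁻¹ * h'⁻¹ := by group
    rw [this]
    exact mem_mul_H (inv_mem hh') (hWmem hw)
  · intro h hh
    obtain ⟨w, hw, h', hh', he⟩ := exists_of_mem_mul_H (hz.1 h⁻¹ (inv_mem hh))
    have : z⁻¹ * h = h'⁻¹ * w⁻¹ := by
      calc z⁻¹ * h = (h⁻¹ * z)⁻¹ := by group
      _ = (w * h')⁻¹ := by rw [he]
      _ = h'⁻¹ * w⁻¹ := by group
    rw [this]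
    exact mem_H_mul (inv_mem hh') (hWmem hw)

theorem PW_mul {W₁ W₂ : Set G} {z w : G} (hz : PW H W₁ z) (hw : PW H W₂ w) :
    PW H (W₁ * W₂) (z * w) := by
  constructor
  · intro h hh
    obtain ⟨u, hu, h', hh', he⟩ := exists_of_mem_mul_H (hz.1 h hh)
    obtain ⟨u', hu', h'', hh'', he'⟩ := exists_of_mem_mul_H (hw.1 h' hh')
    have : h * (z * w) = (u * u') * h'' := by
      calc h * (z * w) = (h * z) * w := by group
      _ = (u * h') * w := by rw [he]
      _ = u * (h' * w) := by group
      _ = u * (u' * h'') := by rw [he']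
      _ = (u * u') * h'' := by group
    rw [this]
    exact mem_mul_H hh'' (Set.mul_mem_mul hu hu')
  · intro h hh
    obtain ⟨h', hh', u', hu', he'⟩ := exists_of_mem_H_mul (hw.2 h hh)
    obtain ⟨h'', hh'', u, hu, he⟩ := exists_of_mem_H_mul (hz.2 h' hh')
    have : (z * w) * h = h'' * (u * u') := by
      calc (z * w) * h = z * (w * h) := by group
      _ = z * (h' * u') := by rw [he']
      _ = (z * h') * u' := by group
      _ = (h'' * u) * u' := by rw [he]
      _ = h'' * (u * u') := by group
    rw [this]
    exact mem_H_mul hh'' (Set.mul_mem_mul hu hu')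

theorem PW_hmul {W : Set G} {z h₁ h₂ : G} (hz : PW H W z) (hh₁ : h₁ ∈ H) (hh₂ : h₂ ∈ H) :
    PW H W (h₁ * z * h₂) := by
  constructor
  · intro h hh
    obtain ⟨u, hu, h', hh', he⟩ := exists_of_mem_mul_H (hz.1 (h * h₁) (mul_mem hh hh₁))
    have : h * (h₁ * z * h₂) = u * (h' * h₂) := by
      calc h * (h₁ * z * h₂) = (h * h₁ * z) * h₂ := by group
      _ = (u * h') * h₂ := by rw [he]
      _ = u * (h' * h₂) := by group
    rw [this]
    exact mem_mul_H (mul_mem hh' hh₂) hu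
  · intro h hh
    obtain ⟨h', hh', u, hu, he⟩ := exists_of_mem_H_mul (hz.2 (h₂ * h) (mul_mem hh₂ hh))
    have : (h₁ * z * h₂) * h = (h₁ * h') * u := by
      calc (h₁ * z * h₂) * h = h₁ * (z * (h₂ * h)) := by group
      _ = h₁ * (h' * u) := by rw [he]
      _ = (h₁ * h') * u := by group
    rw [this]
    exact mem_H_mul (mul_mem hh₁ hh') hu

theorem PW_mem {W : Set G} {z : G} (hz : PW H W z) : z ∈ W * (H : Set G) := by
  simpa using hz.1 1 (one_mem H)

end Aux

/-- For a Polish group `G` and a closed subgroup `H`, the quotient `G ⧸ H` (with the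
quotient topology and the left translation action) admits a compatible `G`-invariant
metric if and only if for every neighbourhood `U` of the identity there is a
neighbourhood `V` of the identity with `V·H ⊆ H·U`. -/
theorem stmt_4 (G : Type*) [Group G] [TopologicalSpace G] [IsTopologicalGroup G]
    [PolishSpace G] (H : Subgroup G) (hH : IsClosed (H : Set G)) :
    (∃ d : (G ⧸ H) → (G ⧸ H) → ℝ,
        (∀ x y, d x y = 0 ↔ x = y) ∧
        (∀ x y, d x y = d y x) ∧
        (∀ x y z, d x z ≤ d x y + d y z) ∧
        (∀ s : Set (G ⧸ H), IsOpen s ↔ ∀ x ∈ s, ∃ ε > 0, ∀ y, d x y < ε → y ∈ s) ∧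
        (∀ (g : G) (x y : G ⧸ H), d (g • x) (g • y) = d x y)) ↔
      (∀ U : Set G, IsOpen U → (1 : G) ∈ U →
        ∃ V : Set G, IsOpen V ∧ (1 : G) ∈ V ∧ V * (H : Set G) ⊆ (H : Set G) * U) := by
  constructor
  · -- easy direction
    rintro ⟨d, hd0, hdsymm, hdtri, hdtop, hdinv⟩ U hU hU1
    set x₀ : G ⧸ H := ((1 : G) : G ⧸ H) with hx₀
    have hUopen : IsOpen (QuotientGroup.mk '' U⁻¹ : Set (G ⧸ H)) :=
      QuotientGroup.isOpenMap_coe U⁻¹ hU.inv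
    have hx₀mem : x₀ ∈ (QuotientGroup.mk '' U⁻¹ : Set (G ⧸ H)) :=
      ⟨1, by simpa using hU1, rfl⟩
    obtain ⟨ε, hε, hball⟩ := ((hdtop _).1 hUopen) x₀ hx₀mem
    -- the ball is open
    have hball_open : IsOpen {y : G ⧸ H | d x₀ y < ε} := by
      refine (hdtop _).2 ?_
      intro x hx
      refine ⟨ε - d x₀ x, by simpa using hx, fun y hy => ?_⟩
      have := hdtri x₀ x y
      simp only [Set.mem_setOf_eq] at *
      linarith
    refine ⟨(fun g : G => ((g⁻¹ : G) : G ⧸ H)) ⁻¹' {y : G ⧸ H | d x₀ y < ε}, ?_, ?_, ?_⟩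
    · exact hball_open.preimage (QuotientGroup.continuous_mk.comp continuous_inv)
    · simp only [Set.mem_preimage, inv_one, Set.mem_setOf_eq, ← hx₀]
      exact (hd0 x₀ x₀).2 rfl ▸ hε
    · rintro a ha
      obtain ⟨v, hv, h, hh, he⟩ := Set.mem_mul.1 ha
      have hh' : h ∈ H := SetLike.mem_coe.1 hh
      have hv' : d x₀ (((v⁻¹ : G)) : G ⧸ H) < ε := hv
      have e2 : x₀ = (h⁻¹ : G) • x₀ := by
        show ((1 : G) : G ⧸ H) = (h⁻¹ : G) • ((1 : G) : G ⧸ H)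
        rw [MulAction.Quotient.smul_mk]
        exact QuotientGroup.eq.2 (by simpa using inv_mem hh')
      have key : d x₀ (((h⁻¹ * v⁻¹ : G)) : G ⧸ H) < ε := by
        have e1 : (((h⁻¹ * v⁻¹ : G)) : G ⧸ H) = (h⁻¹ : G) • (((v⁻¹ : G)) : G ⧸ H) := rfl
        rw [e1]
        calc d x₀ ((h⁻¹ : G) • (((v⁻¹ : G)) : G ⧸ H))
            = d ((h⁻¹ : G) • x₀) ((h⁻¹ : G) • (((v⁻¹ : G)) : G ⧸ H)) := by rw [← e2]
          _ = d x₀ (((v⁻¹ : G)) : G ⧸ H) := hdinv _ _ _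
          _ < ε := hv'
      obtain ⟨u, hu, hu2⟩ := hball _ key
      have hu' : u⁻¹ ∈ U := by simpa using hu
      have hmem : u⁻¹ * (h⁻¹ * v⁻¹) ∈ H := QuotientGroup.eq.1 hu2
      refine Set.mem_mul.2 ⟨(u⁻¹ * (h⁻¹ * v⁻¹))⁻¹, SetLike.mem_coe.2 (inv_mem hmem), u⁻¹, hu', ?_⟩
      rw [← he]; group
  · -- hard direction
    intro hyp
    classical
    -- countable antitone basis of 𝓝 1
    obtain ⟨B, hB⟩ := (𝓝 (1 : G)).exists_antitone_basis
    have hBmem : ∀ n, B n ∈ 𝓝 (1 : G) := fun n => hB.mem n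
    -- shrink lemma
    have shrink : ∀ S : Set G, S ∈ 𝓝 (1 : G) →
        ∃ V : Set G, IsOpen V ∧ (1 : G) ∈ V ∧ V⁻¹ = V ∧ V * V ⊆ S ∧ V ⊆ S := by
      intro S hS
      obtain ⟨W, hWo, hW1, hWW⟩ := exists_open_nhds_one_mul_subset hS
      refine ⟨W ∩ W⁻¹, hWo.inter hWo.inv, ⟨hW1, by simpa using hW1⟩, ?_, ?_, ?_⟩
      · rw [Set.inter_inv, inv_inv, Set.inter_comm]
      · exact (Set.mul_subset_mul inter_subset_left inter_subset_left).trans hWW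
      · intro v hv
        exact hWW (Set.mem_mul.2 ⟨v, hv.1, 1, hW1, mul_one v⟩)
    set F : Set G → Set G := fun S =>
      if h : S ∈ 𝓝 (1 : G) then (shrink S h).choose else Set.univ with hF
    have hFspec : ∀ S (h : S ∈ 𝓝 (1 : G)), IsOpen (F S) ∧ (1 : G) ∈ F S ∧ (F S)⁻¹ = F S ∧
        F S * F S ⊆ S ∧ F S ⊆ S := by
      intro S h
      rw [hF]; simp only [dif_pos h]
      exact (shrink S h).choose_spec
    set U : ℕ → Set G := fun n => Nat.rec (F (B 0)) (fun n Un => F (Un ∩ B (n + 1))) n with hUdef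
    have hU0 : U 0 = F (B 0) := rfl
    have hUsucc : ∀ n, U (n + 1) = F (U n ∩ B (n + 1)) := fun n => rfl
    -- basic properties of U
    have hUbasic : ∀ n, IsOpen (U n) ∧ (1 : G) ∈ U n ∧ (U n)⁻¹ = U n ∧ U n ∈ 𝓝 (1 : G) := by
      intro n
      induction n with
      | zero =>
        obtain ⟨h1, h2, h3, _, _⟩ := hFspec (B 0) (hBmem 0)
        exact ⟨h1, h2, h3, h1.mem_nhds h2⟩
      | succ n ih =>
        have hmem : U n ∩ B (n + 1) ∈ 𝓝 (1 : G) := Filter.inter_mem ih.2.2.2 (hBmem (n + 1))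
        rw [hUsucc]
        obtain ⟨h1, h2, h3, _, _⟩ := hFspec _ hmem
        exact ⟨h1, h2, h3, h1.mem_nhds h2⟩
    have hUstep : ∀ n, U (n + 1) * U (n + 1) ⊆ U n ∧ U (n + 1) ⊆ U n ∧ U (n + 1) ⊆ B (n + 1) := by
      intro n
      have hmem : U n ∩ B (n + 1) ∈ 𝓝 (1 : G) := Filter.inter_mem (hUbasic n).2.2.2 (hBmem (n + 1))
      obtain ⟨_, _, _, h4, h5⟩ := hFspec _ hmem
      rw [hUsucc]
      exact ⟨h4.trans inter_subset_left, h5.trans inter_subset_left,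
        h5.trans inter_subset_right⟩
    have hUanti : ∀ m n, m ≤ n → U n ⊆ U m := by
      intro m n h
      induction h with
      | refl => exact subset_rfl
      | @step k h ih => exact (hUstep k).2.1.trans ih
    have hUbasis : ∀ S ∈ 𝓝 (1 : G), ∃ n, U n ⊆ S := by
      intro S hS
      obtain ⟨n, -, hn⟩ := hB.toHasBasis.mem_iff.1 hS
      rcases n with _ | n
      · exact ⟨0, ((hFspec (B 0) (hBmem 0)).2.2.2.2).trans hn⟩
      · exact ⟨n + 1, (hUstep n).2.2.trans hn⟩
    -- neighbourhoods inside PW sets, using the hypothesis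
    have hnbhd : ∀ W : Set G, IsOpen W → (1 : G) ∈ W → W⁻¹ = W →
        ∃ V : Set G, IsOpen V ∧ (1 : G) ∈ V ∧ ∀ v ∈ V, PW H W v := by
      intro W hWo hW1 hWs
      obtain ⟨V₁, hV₁o, hV₁1, hV₁⟩ := hyp W hWo hW1
      refine ⟨V₁ ∩ V₁⁻¹, hV₁o.inter hV₁o.inv, ⟨hV₁1, by simpa using hV₁1⟩, ?_⟩
      rintro v ⟨hv1, hv2⟩
      constructor
      · intro h hh
        have hv2' : v⁻¹ ∈ V₁ := by simpa using hv2
        have : v⁻¹ * h⁻¹ ∈ (H : Set G) * W :=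
          hV₁ (Set.mem_mul.2 ⟨v⁻¹, hv2', h⁻¹, SetLike.mem_coe.2 (inv_mem hh), rfl⟩)
        obtain ⟨h', hh', w, hw, he⟩ := Set.mem_mul.1 this
        have he' : v⁻¹ * h⁻¹ = h' * w := he.symm
        have : h * v = w⁻¹ * h'⁻¹ := by
          calc h * v = (v⁻¹ * h⁻¹)⁻¹ := by group
          _ = (h' * w)⁻¹ := by rw [he']
          _ = w⁻¹ * h'⁻¹ := by group
        rw [this]
        refine Set.mem_mul.2 ⟨w⁻¹, ?_, h'⁻¹, ?_, rfl⟩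
        · rw [← hWs]; simpa using hw
        · simpa using inv_mem (SetLike.mem_coe.1 hh')
      · intro h hh
        exact hV₁ (Set.mem_mul.2 ⟨v, hv1, h, SetLike.mem_coe.2 hh, rfl⟩)
    -- the relation on the quotient
    set P : ℕ → G → Prop := fun n z => PW H (U (2 * n)) z with hPdef
    have hPmono : ∀ m n, m ≤ n → ∀ z, P n z → P m z := by
      intro m n h z hz
      exact PW_mono (hUanti (2 * m) (2 * n) (by omega)) hz
    have hPcomp : ∀ n (z w v : G), P (n + 1) z → P (n + 1) w → P (n + 1) v → P n (z * w * v) := by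
      intro n z w v hz hw hv
      simp only [hPdef] at hz hw hv ⊢
      have hx : 2 * (n + 1) = 2 * n + 1 + 1 := by ring
      rw [hx] at hz hw hv
      have hzw : PW H (U (2 * n + 1)) (z * w) :=
        PW_mono ((hUstep (2 * n + 1)).1) (PW_mul hz hw)
      have hv' : PW H (U (2 * n + 1)) v := PW_mono ((hUstep (2 * n + 1)).2.1) hv
      exact PW_mono ((hUstep (2 * n)).1) (PW_mul hzw hv')
    -- congruence under H
    have hPcongr : ∀ n (x y x' y' : G), (x : G ⧸ H) = (x' : G ⧸ H) → (y : G ⧸ H) = (y' : G ⧸ H) →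
        P n (x⁻¹ * y) → P n (x'⁻¹ * y') := by
      intro n x y x' y' hx hy hz
      have h₁ : x⁻¹ * x' ∈ H := QuotientGroup.eq.1 hx
      have h₂ : y⁻¹ * y' ∈ H := QuotientGroup.eq.1 hy
      have he : x'⁻¹ * y' = (x⁻¹ * x')⁻¹ * (x⁻¹ * y) * (y⁻¹ * y') := by group
      rw [he]
      exact PW_hmul hz (inv_mem h₁) h₂
    set R : ℕ → (G ⧸ H) → (G ⧸ H) → Prop :=
      fun n a b => P n ((Quotient.out a)⁻¹ * Quotient.out b) with hRdef
    have hRmk : ∀ n (x y : G), R n (x : G ⧸ H) (y : G ⧸ H) ↔ P n (x⁻¹ * y) := by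
      intro n x y
      constructor
      · intro h
        exact hPcongr n _ _ x y (QuotientGroup.out_eq' _) (QuotientGroup.out_eq' _) h
      · intro h
        exact hPcongr n x y _ _ (QuotientGroup.out_eq' _).symm (QuotientGroup.out_eq' _).symm h
    have hRrefl : ∀ n a, R n a a := by
      intro n a
      rw [hRdef]
      simpa using PW_one (H := H) (hUbasic (2 * n)).2.1
    have hRsymm : ∀ n a b, R n a b → R n b a := by
      intro n a b h
      rw [hRdef] at h ⊢
      have := PW_inv (hUbasic (2 * n)).2.2.1 h
      simpa using this
    have hRmono : ∀ {m n} (_ : m ≤ n) {a b}, R n a b → R m a b := by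
      intro m n h a b hab
      exact hPmono m n h _ hab
    have hRcomp : ∀ n (a b c e : G ⧸ H),
        R (n + 1) a b → R (n + 1) b c → R (n + 1) c e → R n a e := by
      intro n a b c e h1 h2 h3
      rw [hRdef] at h1 h2 h3 ⊢
      have := hPcomp n _ _ _ h1 h2 h3
      have he : (Quotient.out a)⁻¹ * Quotient.out b * ((Quotient.out b)⁻¹ * Quotient.out c) *
          ((Quotient.out c)⁻¹ * Quotient.out e) = (Quotient.out a)⁻¹ * Quotient.out e := by group
      rwa [he] at this
    have hRinv : ∀ n (g : G) (a b : G ⧸ H), R n (g • a) (g • b) ↔ R n a b := by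
      intro n g a b
      obtain ⟨x, rfl⟩ : ∃ x : G, (x : G ⧸ H) = a := ⟨Quotient.out a, QuotientGroup.out_eq' a⟩
      obtain ⟨y, rfl⟩ : ∃ y : G, (y : G ⧸ H) = b := ⟨Quotient.out b, QuotientGroup.out_eq' b⟩
      have e1 : g • (x : G ⧸ H) = ((g * x : G) : G ⧸ H) := rfl
      have e2 : g • (y : G ⧸ H) = ((g * y : G) : G ⧸ H) := rfl
      rw [e1, e2, hRmk, hRmk]
      have : (g * x)⁻¹ * (g * y) = x⁻¹ * y := by group
      rw [this]
    -- the premetric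
    set d : (G ⧸ H) → (G ⧸ H) → ℝ≥0 :=
      fun a b => if h : ∃ n, ¬ R n a b then (1 / 2) ^ (Nat.find h) else 0 with hddef
    have hd_eq_of : ∀ a b a' b', (∀ n, R n a b ↔ R n a' b') → d a b = d a' b' := by
      intro a b a' b' hiff
      have hEx : (∃ n, ¬ R n a b) ↔ (∃ n, ¬ R n a' b') :=
        exists_congr fun n => not_congr (hiff n)
      by_cases h : ∃ n, ¬ R n a b
      · simp only [hddef, dif_pos h, dif_pos (hEx.1 h)]
        congr 1
        exact le_antisymm (Nat.find_mono fun n hn => (not_congr (hiff n)).2 hn)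
          (Nat.find_mono fun n hn => (not_congr (hiff n)).1 hn)
      · simp only [hddef, dif_neg h, dif_neg (fun h' : ∃ n, ¬ R n a' b' => h (hEx.2 h'))]
    have hd_self : ∀ a, d a a = 0 := by
      intro a
      simp only [hddef]
      exact dif_neg (by push_neg; exact fun n => hRrefl n a)
    have hd_symm : ∀ a b, d a b = d b a :=
      fun a b => hd_eq_of a b b a fun n => ⟨hRsymm n a b, hRsymm n b a⟩
    have hr : (1 / 2 : ℝ≥0) ∈ Set.Ioo (0 : ℝ≥0) 1 :=
      ⟨half_pos one_pos, NNReal.half_lt_self one_ne_zero⟩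
    have hle_d : ∀ {a b : G ⧸ H} {n : ℕ}, (1 / 2 : ℝ≥0) ^ n ≤ d a b ↔ ¬ R n a b := by
      intro a b n
      simp only [hddef]
      split_ifs with h
      · rw [(pow_right_strictAnti₀ hr.1 hr.2).le_iff_ge, Nat.find_le_iff]
        exact ⟨fun ⟨m, hmn, hm⟩ hn => hm (hRmono hmn hn), fun h' => ⟨n, le_rfl, h'⟩⟩
      · push_neg at h
        simp only [h n, not_true, iff_false, not_le]
        exact pow_pos hr.1 _
    set I : PseudoMetricSpace (G ⧸ H) := PseudoMetricSpace.ofPreNNDist d hd_self hd_symm with hI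
    set D : (G ⧸ H) → (G ⧸ H) → ℝ := fun a b => @dist _ I.toDist a b with hD
    have hdist_le : ∀ a b, D a b ≤ d a b :=
      fun a b => PseudoMetricSpace.dist_ofPreNNDist_le d hd_self hd_symm a b
    have hd_le : ∀ a b, (d a b : ℝ) ≤ 2 * D a b := by
      refine PseudoMetricSpace.le_two_mul_dist_ofPreNNDist d hd_self hd_symm
        (fun a₁ a₂ a₃ a₄ => ?_)
      by_cases Hex : ∃ n, ¬ R n a₁ a₄
      · rw [show d a₁ a₄ = (1 / 2 : ℝ≥0) ^ (Nat.find Hex) from dif_pos Hex]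
        rw [← div_le_iff₀' zero_lt_two, ← mul_one_div ((1 / 2 : ℝ≥0) ^ _), ← pow_succ]
        simp only [le_max_iff, hle_d, ← not_and_or]
        rintro ⟨h12, h23, h34⟩
        exact Nat.find_spec Hex (hRcomp _ _ _ _ _ h12 h23 h34)
      · simp only [hddef]
        rw [dif_neg Hex]
        exact (zero_le).trans (le_max_left _ _) |>.trans (le_mul_of_one_le_left (by positivity) one_le_two)
    have hd_inv : ∀ (g : G) (a b : G ⧸ H), d (g • a) (g • b) = d a b :=
      fun g a b => hd_eq_of _ _ _ _ fun n => hRinv n g a b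
    have hDeq : ∀ a b : G ⧸ H,
        D a b = ↑(⨅ l : List (G ⧸ H), ((a :: l).zipWith d (l ++ [b])).sum) :=
      fun a b => PseudoMetricSpace.dist_ofPreNNDist d hd_self hd_symm a b
    refine ⟨D, ?_, ?_, ?_, ?_, ?_⟩
    · -- positivity
      intro a b
      constructor
      · intro h0
        have hd0 : d a b = 0 := by
          have h1 : (d a b : ℝ) ≤ 0 := by
            have h2 := hd_le a b
            rw [h0] at h2
            simpa using h2
          have h3 : (d a b : ℝ) = 0 := le_antisymm h1 (by positivity)
          exact_mod_cast h3
        have hall : ∀ n, R n a b := by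
          by_contra hc
          push_neg at hc
          have hex : ∃ n, ¬ R n a b := hc
          have he : d a b = (1 / 2 : ℝ≥0) ^ Nat.find hex := by
            simp only [hddef, dif_pos hex]
          rw [hd0] at he
          exact absurd he.symm (pow_pos hr.1 _).ne'
        set x := Quotient.out a with hx
        set y := Quotient.out b with hy
        set z := x⁻¹ * y with hz
        have hzH : z ∈ closure (H : Set G) := by
          rw [mem_closure_iff_nhds]
          intro t ht
          have htend : Filter.Tendsto (fun g : G => g⁻¹ * z) (𝓝 1) (𝓝 z) := by
            have hc : Continuous (fun g : G => g⁻¹ * z) := continuous_inv.mul continuous_const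
            simpa using hc.tendsto 1
          have h2 : (fun g : G => g⁻¹ * z) ⁻¹' t ∈ 𝓝 (1 : G) := htend ht
          obtain ⟨n, hn⟩ := hUbasis _ h2
          have hPn : P n z := by
            have := hall n
            rw [hRdef] at this
            exact this
          obtain ⟨u, hu, h', hh', he⟩ := exists_of_mem_mul_H (PW_mem hPn)
          refine ⟨u⁻¹ * z, ?_, ?_⟩
          · exact hn (hUanti n (2 * n) (by omega) hu)
          · have : u⁻¹ * z = h' := by rw [he]; group
            rw [this]
            exact SetLike.mem_coe.2 hh'
        rw [hH.closure_eq] at hzH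
        calc a = (x : G ⧸ H) := (QuotientGroup.out_eq' a).symm
          _ = (y : G ⧸ H) := QuotientGroup.eq.2 hzH
          _ = b := QuotientGroup.out_eq' b
      · rintro rfl
        simp only [hD]
        exact @dist_self _ I a
    · intro a b
      simp only [hD]
      exact @dist_comm _ I a b
    · intro a b c
      simp only [hD]
      exact @dist_triangle _ I a b c
    · -- topology
      intro s
      constructor
      · intro hs xq hxq
        set g := Quotient.out xq with hg
        have hgmk : (g : G ⧸ H) = xq := QuotientGroup.out_eq' xq
        have hpre : IsOpen ((QuotientGroup.mk : G → G ⧸ H) ⁻¹' s) :=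
          hs.preimage QuotientGroup.continuous_mk
        have hgmem : g ∈ (QuotientGroup.mk : G → G ⧸ H) ⁻¹' s := by
          simp only [Set.mem_preimage, hgmk]
          exact hxq
        have htend : Filter.Tendsto (fun a : G => g * a) (𝓝 1) (𝓝 g) := by
          have hc : Continuous (fun a : G => g * a) := continuous_const.mul continuous_id
          simpa using hc.tendsto 1
        have h2 : (fun a : G => g * a) ⁻¹' ((QuotientGroup.mk : G → G ⧸ H) ⁻¹' s) ∈ 𝓝 (1 : G) :=
          htend (hpre.mem_nhds hgmem)
        obtain ⟨n, hn⟩ := hUbasis _ h2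
        refine ⟨(1 / 2 : ℝ) ^ (n + 1), by positivity, ?_⟩
        intro y hy
        have hcast : ((1 / 2 : ℝ≥0) : ℝ) = (1 / 2 : ℝ) := by norm_num
        have hR : R n xq y := by
          by_contra hc
          have h1 : (1 / 2 : ℝ≥0) ^ n ≤ d xq y := hle_d.2 hc
          have h2' : ((1 / 2 : ℝ)) ^ n ≤ (d xq y : ℝ) := by
            have := NNReal.coe_le_coe.2 h1
            rw [NNReal.coe_pow, hcast] at this
            exact this
          have h4 : (d xq y : ℝ) ≤ 2 * D xq y := hd_le xq y
          have h5 : D xq y < (1 / 2 : ℝ) ^ (n + 1) := hy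
          rw [pow_succ] at h5
          nlinarith
        have hPn : P n (g⁻¹ * Quotient.out y) := by
          rw [hRdef] at hR
          exact hR
        obtain ⟨u, hu, h', hh', he⟩ := exists_of_mem_mul_H (PW_mem hPn)
        have hyq : y = ((g * u : G) : G ⧸ H) := by
          have h6 : (QuotientGroup.mk (Quotient.out y) : G ⧸ H) = y := QuotientGroup.out_eq' y
          rw [← h6]
          refine QuotientGroup.eq.2 ?_
          have h8 : Quotient.out y = g * u * h' := by
            calc Quotient.out y = g * (g⁻¹ * Quotient.out y) := by group
            _ = g * (u * h') := by rw [← he]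
            _ = g * u * h' := by group
          have h7 : (Quotient.out y)⁻¹ * (g * u) = h'⁻¹ := by rw [h8]; group
          rw [h7]
          exact inv_mem hh'
        rw [hyq]
        have := hn (hUanti n (2 * n) (by omega) hu)
        simpa using this
      · intro hball
        rw [← (QuotientGroup.isQuotientMap_mk H).isOpen_preimage, isOpen_iff_mem_nhds]
        intro g hg
        have hgs : ((g : G) : G ⧸ H) ∈ s := hg
        obtain ⟨ε, hε, hb⟩ := hball _ hgs
        obtain ⟨n, hnε⟩ : ∃ n : ℕ, (1 / 2 : ℝ) ^ n < ε :=
          exists_pow_lt_of_lt_one hε (by norm_num)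
        obtain ⟨V, hVo, hV1, hVP⟩ :=
          hnbhd (U (2 * n)) (hUbasic _).1 (hUbasic _).2.1 (hUbasic _).2.2.1
        have hopen : IsOpen ((fun a => g * a) '' V) := (isOpenMap_mul_left g) V hVo
        have hmem : (fun a => g * a) '' V ∈ 𝓝 g := hopen.mem_nhds ⟨1, hV1, mul_one g⟩
        refine Filter.mem_of_superset hmem ?_
        rintro _ ⟨v, hv, rfl⟩
        simp only [Set.mem_preimage]
        apply hb
        have hR : R n ((g : G ⧸ H)) (((g * v : G) : G ⧸ H)) := by
          rw [hRmk]
          have hgv : g⁻¹ * (g * v) = v := by group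
          rw [hgv]
          exact hVP v hv
        have h1 : d ((g : G ⧸ H)) (((g * v : G) : G ⧸ H)) < (1 / 2 : ℝ≥0) ^ n :=
          lt_of_not_ge fun hle => (hle_d.1 hle) hR
        have hcast : ((1 / 2 : ℝ≥0) : ℝ) = (1 / 2 : ℝ) := by norm_num
        calc D ((g : G ⧸ H)) (((g * v : G) : G ⧸ H))
            ≤ (d ((g : G ⧸ H)) (((g * v : G) : G ⧸ H)) : ℝ) := hdist_le _ _
          _ < ((1 / 2 : ℝ)) ^ n := by
              have := NNReal.coe_lt_coe.2 h1
              rwa [NNReal.coe_pow, hcast] at this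
          _ < ε := hnε
    · -- invariance
      intro g a b
      rw [hDeq, hDeq]
      refine congrArg _ ?_
      have hsurj : Function.Surjective (fun l : List (G ⧸ H) => l.map (g • ·)) := by
        intro l
        refine ⟨l.map (g⁻¹ • ·), ?_⟩
        simp [List.map_map, Function.comp_def]
      refine (Function.Surjective.iInf_congr _ hsurj fun l => ?_).symm
      have hmap1 : (g • a) :: (l.map (g • ·)) = (a :: l).map (g • ·) := by simp
      have hmap2 : (l.map (g • ·)) ++ [g • b] = (l ++ [b]).map (g • ·) := by simp
      rw [hmap1, hmap2, List.zipWith_map]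
      have hfun : (fun (x y : G ⧸ H) => d (g • x) (g • y)) = d := by
        funext x y
        exact hd_inv g x y
      rw [hfun]
end

section
/- Let G be a Roelcke-precompact Polish group, let X and Y be nonempty complete metric spaces equipped with jointly continuous isometric G-actions in which every orbit is dense (minimal complete G-spaces), and let π : Y → X be continuous and G-equivariant. Then π is uniformly continuous. -/
open Pointwise

/-- A morphism between minimal complete `G`-spaces, for `G` Roelcke-precompact Polish,
is uniformly continuous. -/
theorem stmt_5 (G : Type*) [Group G] [TopologicalSpace G] [IsTopologicalGroup G]
    [PolishSpace G] (hRP : RoelckePrecompact G)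
    (X Y : Type*) [MetricSpace X] [CompleteSpace X] [Nonempty X]
    [MetricSpace Y] [CompleteSpace Y] [Nonempty Y]
    [MulAction G X] [MulAction G Y]
    (hcX : Continuous fun p : G × X => p.1 • p.2)
    (hisoX : ∀ g : G, Isometry fun x : X => g • x)
    (hminX : ∀ x : X, Dense (MulAction.orbit G x))
    (hcY : Continuous fun p : G × Y => p.1 • p.2)
    (hisoY : ∀ g : G, Isometry fun y : Y => g • y)
    (hminY : ∀ y : Y, Dense (MulAction.orbit G y))
    (π : Y → X) (hπ : Continuous π)
    (hequiv : ∀ (g : G) (y : Y), π (g • y) = g • π y) :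
    UniformContinuous π := by
  rw [Metric.uniformContinuous_iff]
  intro ε hε
  obtain ⟨y₀⟩ := ‹Nonempty Y›
  have hcont : ContinuousAt π y₀ := hπ.continuousAt
  rw [Metric.continuousAt_iff] at hcont
  obtain ⟨δ₀, hδ₀, h⟩ := hcont (ε / 2) (by linarith)
  -- Key estimate: any point within δ₀ of an orbit point `g • y₀` maps within ε/2 of `g • π y₀`.
  have key : ∀ (g : G) (w : Y), dist w (g • y₀) < δ₀ → dist (π w) (g • π y₀) < ε / 2 := by
    intro g w hw
    have h1 : dist (g⁻¹ • w) y₀ < δ₀ := by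
      have := (hisoY g⁻¹).dist_eq w (g • y₀)
      rw [inv_smul_smul] at this
      rw [this]; exact hw
    have h2 : dist (π (g⁻¹ • w)) (π y₀) < ε / 2 := h h1
    rw [hequiv] at h2
    have h3 := (hisoX g).dist_eq (g⁻¹ • π w) (π y₀)
    rw [smul_inv_smul] at h3
    rw [h3]; exact h2
  refine ⟨δ₀ / 2, by linarith, ?_⟩
  intro y y' hyy'
  obtain ⟨z, hz, hzo⟩ := Metric.dense_iff.mp (hminY y₀) y' (δ₀ / 2) (by linarith)
  obtain ⟨g, rfl⟩ := hzo
  have hy' : dist y' (g • y₀) < δ₀ / 2 := by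
    rw [dist_comm]; exact Metric.mem_ball.mp hz
  have hy : dist y (g • y₀) < δ₀ :=
    calc dist y (g • y₀) ≤ dist y y' + dist y' (g • y₀) := dist_triangle _ _ _
      _ < δ₀ / 2 + δ₀ / 2 := by exact add_lt_add hyy' hy'
      _ = δ₀ := by ring
  calc dist (π y) (π y') ≤ dist (π y) (g • π y₀) + dist (g • π y₀) (π y') :=
        dist_triangle _ _ _
    _ < ε / 2 + ε / 2 := add_lt_add (key g y hy)
        (by rw [dist_comm]; exact key g y' (by linarith))
    _ = ε := by ring
end

section
/- Let G be a Roelcke-precompact Polish group and let d_L be a compatible left-invariant metric on G (d_L(hg, hg') = d_L(g, g') for all g, g', h). Let X be a nonempty complete metric space with a jointly continuous isometric G-action in which every orbit is dense, and let (x_i)_{i ∈ ℕ} be a sequence in X. Then there exist a point z ∈ X and, for each i ∈ ℕ, a sequence (g_{i,n})_{n ∈ ℕ} in G which is Cauchy with respect to d_L and satisfies g_{i,n}·x_i → z as n → ∞. -/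
open Pointwise Filter

section Aux

variable {G : Type*} [Group G] [TopologicalSpace G] [IsTopologicalGroup G]

/-- Bundle of hypotheses on the compatible left-invariant metric. -/
structure IsLeftMet (dL : G → G → ℝ) : Prop where
  d0 : ∀ g h : G, dL g h = 0 ↔ g = h
  symm : ∀ g h : G, dL g h = dL h g
  tri : ∀ g h k : G, dL g k ≤ dL g h + dL h k
  inv : ∀ g g' h : G, dL (h * g) (h * g') = dL g g'
  top : ∀ (g : G) (s : Set G), s ∈ nhds g ↔ ∃ ε > (0 : ℝ), {h | dL g h < ε} ⊆ s

variable {dL : G → G → ℝ}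

/-- Cauchy with respect to the left-invariant metric. -/
def CauchyL (dL : G → G → ℝ) (g : ℕ → G) : Prop :=
  ∀ ε > (0 : ℝ), ∃ N : ℕ, ∀ m n : ℕ, N ≤ m → N ≤ n → dL (g m) (g n) < ε

namespace IsLeftMet

theorem refl (h : IsLeftMet dL) (g : G) : dL g g = 0 := (h.d0 g g).2 rfl

theorem nonneg (h : IsLeftMet dL) (g k : G) : 0 ≤ dL g k := by
  have := h.tri g k g
  rw [h.refl, h.symm k g] at this
  linarith

theorem mul_right (h : IsLeftMet dL) (g c : G) : dL g (g * c) = dL 1 c := by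
  have := h.inv 1 c g
  simpa using this

theorem one_inv (h : IsLeftMet dL) (g : G) : dL 1 g⁻¹ = dL 1 g := by
  have := h.inv g 1 g⁻¹
  simp only [inv_mul_cancel, mul_one] at this
  rw [this, h.symm]

theorem one_mul_le (h : IsLeftMet dL) (a b : G) : dL 1 (a * b) ≤ dL 1 a + dL 1 b := by
  have t := h.tri 1 a (a * b)
  rw [h.mul_right a b] at t
  exact t

theorem dL_inv_mul (h : IsLeftMet dL) (a b : G) : dL 1 (a⁻¹ * b) = dL a b := by
  have := h.inv 1 (a⁻¹ * b) a
  simp only [mul_one] at this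
  rw [← this, mul_inv_cancel_left]

/-- balls are open -/
theorem ball_mem_nhds (h : IsLeftMet dL) (g : G) {ε : ℝ} (hε : 0 < ε) :
    {k | dL g k < ε} ∈ nhds g :=
  (h.top g _).2 ⟨ε, hε, fun _ hk => hk⟩

theorem isOpen_ball (h : IsLeftMet dL) (g : G) (ε : ℝ) : IsOpen {k | dL g k < ε} := by
  rw [isOpen_iff_mem_nhds]
  intro k hk
  rw [h.top k]
  refine ⟨ε - dL g k, by simp at hk; linarith, fun m hm => ?_⟩
  simp only [Set.mem_setOf_eq] at hm ⊢
  have := h.tri g k m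
  linarith

/-- conjugation modulus: conjugating by a fixed `q` is continuous at 1. -/
theorem conj_modulus (h : IsLeftMet dL) (q : G) {κ : ℝ} (hκ : 0 < κ) :
    ∃ ε > (0 : ℝ), ∀ c : G, dL 1 c < ε → dL 1 (q⁻¹ * c * q) < κ := by
  have hcont : Continuous fun c : G => q⁻¹ * c * q := by continuity
  have h1 : (fun c : G => q⁻¹ * c * q) 1 = 1 := by group
  have htd : Tendsto (fun c : G => q⁻¹ * c * q) (nhds 1) (nhds 1) := by
    simpa [h1] using hcont.tendsto 1
  have hmem : {c : G | dL 1 (q⁻¹ * c * q) < κ} ∈ nhds (1 : G) :=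
    htd (h.ball_mem_nhds 1 hκ)
  rcases (h.top 1 _).1 hmem with ⟨ε, hε, hsub⟩
  exact ⟨ε, hε, fun c hc => hsub hc⟩

/-- conjugation with additive cost: `dL 1 (t⁻¹ * m * t) ≤ dL 1 m + 2 * dL 1 t`. -/
theorem conj_cost (h : IsLeftMet dL) (t m : G) :
    dL 1 (t⁻¹ * m * t) ≤ dL 1 m + 2 * dL 1 t := by
  have h1 : dL 1 (t⁻¹ * (m * t)) ≤ dL 1 t⁻¹ + dL 1 (m * t) := by
    have := h.one_mul_le t⁻¹ (m * t); linarith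
  have h2 : dL 1 (m * t) ≤ dL 1 m + dL 1 t := h.one_mul_le m t
  have h3 : dL 1 t⁻¹ = dL 1 t := h.one_inv t
  calc dL 1 (t⁻¹ * m * t) = dL 1 (t⁻¹ * (m * t)) := by rw [mul_assoc]
    _ ≤ dL 1 t⁻¹ + dL 1 (m * t) := h1
    _ ≤ dL 1 m + 2 * dL 1 t := by linarith

/-- uniform conjugation bound along the tail of a `dL`-Cauchy sequence. -/
theorem conj_tail (h : IsLeftMet dL) {W : ℕ → G} (hW : CauchyL dL W) {γ : ℝ} (hγ : 0 < γ) :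
    ∃ ε > (0 : ℝ), ∃ N : ℕ, ∀ c : G, dL 1 c < ε → ∀ m : ℕ, N ≤ m →
      dL 1 ((W m)⁻¹ * c * W m) < γ := by
  rcases hW (γ / 4) (by linarith) with ⟨N, hN⟩
  rcases h.conj_modulus (W N) (show (0:ℝ) < γ / 4 by linarith) with ⟨ε, hε, hconj⟩
  refine ⟨ε, hε, N, fun c hc m hm => ?_⟩
  -- W m = W N * t with dL 1 t = dL (W N) (W m) < γ/4
  set t := (W N)⁻¹ * W m with ht
  have hWm : W m = W N * t := by rw [ht]; group
  have hdt : dL 1 t < γ / 4 := by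
    rw [ht, h.dL_inv_mul]
    exact hN N m le_rfl hm
  have key : (W m)⁻¹ * c * W m = t⁻¹ * ((W N)⁻¹ * c * W N) * t := by
    rw [hWm]; group
  rw [key]
  have := h.conj_cost t ((W N)⁻¹ * c * W N)
  have := hconj c hc
  linarith

/-- telescoping along a potential function. -/
theorem chain (h : IsLeftMet dL) (f : ℕ → G) (R : ℕ → ℝ)
    (hstep : ∀ t : ℕ, dL (f t) (f (t + 1)) ≤ R t - R (t + 1)) :
    ∀ j l : ℕ, j ≤ l → dL (f j) (f l) ≤ R j - R l := by
  intro j l hjl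
  induction l with
  | zero =>
    have : j = 0 := Nat.le_zero.1 hjl
    subst this; simp [h.refl]
  | succ l ih =>
    rcases Nat.lt_or_ge j (l + 1) with hlt | hge
    · have hjle : j ≤ l := Nat.lt_succ_iff.1 hlt
      have := ih hjle
      have := hstep l
      have := h.tri (f j) (f l) (f (l + 1))
      linarith
    · have : j = l + 1 := le_antisymm hjl hge
      rw [this]; simp [h.refl]

theorem antitoneR (h : IsLeftMet dL) {f : ℕ → G} {R : ℕ → ℝ}
    (hstep : ∀ t : ℕ, dL (f t) (f (t + 1)) ≤ R t - R (t + 1)) : Antitone R := by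
  have : ∀ t, R (t + 1) ≤ R t := fun t => by
    have := hstep t; have := h.nonneg (f t) (f (t + 1)); linarith
  exact antitone_nat_of_succ_le this

/-- a chain with potential `R → 0` is Cauchy. -/
theorem cauchyL_of_chain (h : IsLeftMet dL) {f : ℕ → G} {R : ℕ → ℝ}
    (hstep : ∀ t : ℕ, dL (f t) (f (t + 1)) ≤ R t - R (t + 1))
    (hR0 : Tendsto R atTop (nhds 0)) : CauchyL dL f := by
  intro ε hε
  rcases (eventually_atTop).1 (hR0.eventually (gt_mem_nhds hε)) with ⟨N, hN⟩
  refine ⟨N, fun m n hm hn => ?_⟩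
  have hRN : R N < ε := hN N le_rfl
  have hmono := h.antitoneR hstep
  have hRnonneg : ∀ t, 0 ≤ R t := fun t =>
    le_of_tendsto hR0 (eventually_atTop.2 ⟨t, fun s hs => hmono hs⟩)
  rcases le_or_gt m n with hmn | hnm
  · have := h.chain f R hstep m n hmn
    have := hmono hm
    have := hRnonneg n
    linarith
  · have := h.chain f R hstep n m (le_of_lt hnm)
    have := hmono hn
    have := hRnonneg m
    rw [h.symm]
    linarith

end IsLeftMet




variable {X : Type*} [MetricSpace X] [MulAction G X]

namespace IsLeftMet

/-- continuity of the action at `(1, x)` with `dL`-balls. -/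
theorem act_modulus (h : IsLeftMet dL)
    (hcX : Continuous fun p : G × X => p.1 • p.2) (x : X) {κ : ℝ} (hκ : 0 < κ) :
    ∃ ε > (0 : ℝ), ∀ c : G, dL 1 c < ε → dist (c • x) x < κ := by
  have htd : Tendsto (fun c : G => c • x) (nhds 1) (nhds x) := by
    have : Tendsto (fun c : G => ((c, x) : G × X)) (nhds 1) (nhds (1, x)) :=
      (continuous_id.prodMk continuous_const).tendsto 1
    have := (hcX.tendsto (1, x)).comp this
    simpa using (by exact this : Tendsto (fun c : G => c • x) (nhds 1) (nhds ((1 : G) • x)))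
  have hmem : {c : G | dist (c • x) x < κ} ∈ nhds (1 : G) :=
    htd (Metric.ball_mem_nhds x hκ)
  rcases (h.top 1 _).1 hmem with ⟨ε, hε, hsub⟩
  exact ⟨ε, hε, fun c hc => hsub hc⟩

theorem dist_smul_smul (hisoX : ∀ g : G, Isometry fun x : X => g • x) (g : G) (a b : X) :
    dist (g • a) (g • b) = dist a b := (hisoX g).dist_eq a b

theorem dist_smul_eq (h : IsLeftMet dL) (hisoX : ∀ g : G, Isometry fun x : X => g • x)
    (g k : G) (a : X) :
    dist (g • a) (k • a) = dist ((g⁻¹ * k) • a) a := by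
  have : dist (g • a) (k • a) = dist (g⁻¹ • g • a) (g⁻¹ • k • a) :=
    (dist_smul_smul hisoX g⁻¹ (g • a) (k • a)).symm
  rw [this, smul_smul, smul_smul, inv_mul_cancel, one_smul, dist_comm]

/-- a `dL`-Cauchy sequence applied to a point is Cauchy in `X`. -/
theorem cauchySeq_smul (h : IsLeftMet dL)
    (hcX : Continuous fun p : G × X => p.1 • p.2)
    (hisoX : ∀ g : G, Isometry fun x : X => g • x)
    {W : ℕ → G} (hW : CauchyL dL W) (x : X) :
    CauchySeq (fun n => W n • x) := by
  rw [Metric.cauchySeq_iff]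
  intro κ hκ
  rcases h.act_modulus hcX x hκ with ⟨ε, hε, hact⟩
  rcases hW ε hε with ⟨N, hN⟩
  refine ⟨N, fun m hm n hn => ?_⟩
  rw [dist_smul_eq h hisoX]
  apply hact
  rw [h.dL_inv_mul]
  exact hN m n hm hn

/-- pigeonhole refinement step using Roelcke precompactness. -/
theorem refine_class (h : IsLeftMet dL) (hRP : RoelckePrecompact G) (a : ℕ → G)
    {ε : ℝ} (hε : 0 < ε) (S : Set ℕ) (hS : S.Infinite) :
    ∃ S' : Set ℕ, S' ⊆ S ∧ S'.Infinite ∧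
      ∀ k ∈ S', ∀ l ∈ S', ∃ u v : G,
        dL 1 u < 2 * ε ∧ dL 1 v < 2 * ε ∧ a l = u * a k * v := by
  set B : Set G := {k | dL 1 k < ε} with hB
  have hBopen : IsOpen B := h.isOpen_ball 1 ε
  have hBne : B.Nonempty := ⟨1, by simpa [hB, h.refl] using hε⟩
  obtain ⟨F, hFfin, hcov⟩ := hRP B hBne hBopen
  set P : G → Set ℕ := fun f => {k ∈ S | ∃ p q : G, dL 1 p < ε ∧ dL 1 q < ε ∧ a k = p * f * q}
    with hP
  have hcover : S ⊆ ⋃ f ∈ F, P f := by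
    intro k hk
    have : a k ∈ B * F * B := by rw [hcov]; trivial
    rcases Set.mem_mul.1 this with ⟨pf, hpf, q, hq, hpfq⟩
    rcases Set.mem_mul.1 hpf with ⟨p, hp, f, hf, hpf'⟩
    refine Set.mem_biUnion hf ?_
    exact ⟨hk, p, q, hp, hq, by rw [← hpfq, ← hpf']⟩
  have hex : ∃ f ∈ F, (P f).Infinite := by
    by_contra hcon
    push_neg at hcon
    have hfin : (⋃ f ∈ F, P f).Finite :=
      Set.Finite.biUnion hFfin fun f hf => (hcon f hf)
    exact hS (hfin.subset hcover)
  rcases hex with ⟨f, hfF, hfinf⟩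
  refine ⟨P f, fun k hk => hk.1, hfinf, ?_⟩
  rintro k ⟨hkS, p, q, hp, hq, hak⟩ l ⟨hlS, p', q', hp', hq', hal⟩
  refine ⟨p' * p⁻¹, q⁻¹ * q', ?_, ?_, ?_⟩
  · have h1 := h.one_mul_le p' p⁻¹
    have h2 := h.one_inv p
    linarith
  · have h1 := h.one_mul_le q⁻¹ q'
    have h2 := h.one_inv q
    linarith
  · rw [hak, hal]; group

end IsLeftMet




namespace IsLeftMet

/-- The two-point amalgamation lemma: from `x` one can reach, by a `dL`-Cauchy sequence,
a point `z` which is also reachable from `y` by a `dL`-Cauchy sequence of cost `< ε`. -/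
theorem amalgam (h : IsLeftMet dL) (hRP : RoelckePrecompact G)
    (hcX : Continuous fun p : G × X => p.1 • p.2)
    (hisoX : ∀ g : G, Isometry fun x : X => g • x)
    [CompleteSpace X]
    (x y : X) (hdense : Dense (MulAction.orbit G x)) {ε : ℝ} (hε : 0 < ε) :
    ∃ (z : X) (C D : ℕ → G), CauchyL dL C ∧ CauchyL dL D ∧ (∀ j, dL 1 (D j) < ε) ∧
      Tendsto (fun j => C j • x) atTop (nhds z) ∧
      Tendsto (fun j => D j • y) atTop (nhds z) := by
  classical
  -- approximating sequence from the dense orbit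
  have ha : ∀ k : ℕ, ∃ g : G, dist (g • x) y < 1 / (k + 1) := by
    intro k
    rcases (Metric.dense_iff.1 hdense) y (1 / (k + 1)) (by positivity) with ⟨b, hb, hborb⟩
    rcases MulAction.mem_orbit_iff.1 hborb with ⟨g, hg⟩
    exact ⟨g, by rw [hg]; exact Metric.mem_ball.1 hb⟩
  choose a haa using ha
  -- scales and potential
  set εj : ℕ → ℝ := fun j => ε / 2 ^ (j + 3) with hεj
  set Rd : ℕ → ℝ := fun j => ε / 2 ^ (j + 1) with hRd
  have hεjpos : ∀ j, 0 < εj j := fun j => by positivity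
  have hkey : ∀ j, 2 * εj j = Rd j - Rd (j + 1) := by
    intro j
    simp only [hεj, hRd]
    rw [pow_succ, pow_succ, pow_succ]
    field_simp
    ring
  -- nested infinite sets
  have hstep : ∀ j (s : Set ℕ), s.Infinite → ∃ s', s' ⊆ s ∧ s'.Infinite ∧
      ∀ k ∈ s', ∀ l ∈ s', ∃ u' v' : G,
        dL 1 u' < 2 * εj j ∧ dL 1 v' < 2 * εj j ∧ a l = u' * a k * v' :=
    fun j s hs => h.refine_class hRP a (hεjpos j) s hs
  let SC : ℕ → {s : Set ℕ // s.Infinite} := fun n =>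
    Nat.rec ⟨Set.univ, Set.infinite_univ⟩
      (fun j p => ⟨(hstep j p.1 p.2).choose, (hstep j p.1 p.2).choose_spec.2.1⟩) n
  have hSCsub : ∀ j, (SC (j + 1)).1 ⊆ (SC j).1 :=
    fun j => (hstep j (SC j).1 (SC j).2).choose_spec.1
  have hSCrel : ∀ j, ∀ k ∈ (SC (j + 1)).1, ∀ l ∈ (SC (j + 1)).1,
      ∃ u' v' : G, dL 1 u' < 2 * εj j ∧ dL 1 v' < 2 * εj j ∧ a l = u' * a k * v' :=
    fun j => (hstep j (SC j).1 (SC j).2).choose_spec.2.2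
  -- increasing index selection
  let ks : ℕ → ℕ := fun n =>
    Nat.rec ((SC 1).2.exists_gt 0).choose
      (fun j kj => ((SC (j + 2)).2.exists_gt kj).choose) n
  have hmem : ∀ j, ks j ∈ (SC (j + 1)).1 := by
    intro j
    cases j with
    | zero => exact ((SC 1).2.exists_gt 0).choose_spec.1
    | succ j => exact ((SC (j + 2)).2.exists_gt (ks j)).choose_spec.1
  have hlt : ∀ j, ks j < ks (j + 1) :=
    fun j => ((SC (j + 2)).2.exists_gt (ks j)).choose_spec.2
  have hgej : ∀ j, j ≤ ks j := by
    intro j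
    induction j with
    | zero => exact Nat.zero_le _
    | succ j ih => exact Nat.succ_le_of_lt (lt_of_le_of_lt ih (hlt j))
  -- relation between consecutive selected elements
  have hrel : ∀ j, ∃ u' v' : G, dL 1 u' < 2 * εj j ∧ dL 1 v' < 2 * εj j ∧
      a (ks (j + 1)) = u' * a (ks j) * v' := by
    intro j
    exact hSCrel j (ks j) (hmem j) (ks (j + 1)) (hSCsub (j + 1) (hmem (j + 1)))
  choose u v hu hv heq using hrel
  -- accumulated products
  let V : ℕ → G := fun n => Nat.rec 1 (fun j Vj => Vj * v j) n
  let D : ℕ → G := fun n => Nat.rec 1 (fun j Dj => Dj * (u j)⁻¹) n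
  have hV : ∀ j, V (j + 1) = V j * v j := fun j => rfl
  have hDs : ∀ j, D (j + 1) = D j * (u j)⁻¹ := fun j => rfl
  have hV0 : V 0 = 1 := rfl
  have hD0 : D 0 = 1 := rfl
  have hid : ∀ j, a (ks j) = (D j)⁻¹ * a (ks 0) * V j := by
    intro j
    induction j with
    | zero => rw [hV0, hD0]; group
    | succ j ih => rw [heq j, ih, hV j, hDs j]; group
  set C : ℕ → G := fun j => a (ks 0) * V j with hC
  -- chain bounds
  have hCstep : ∀ t, dL (C t) (C (t + 1)) ≤ Rd t - Rd (t + 1) := by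
    intro t
    have : C (t + 1) = C t * v t := by simp only [hC, hV t]; rw [mul_assoc]
    rw [this, h.mul_right, ← hkey t]
    exact le_of_lt (hv t)
  have hDstep : ∀ t, dL (D t) (D (t + 1)) ≤ Rd t - Rd (t + 1) := by
    intro t
    rw [hDs t, h.mul_right, h.one_inv, ← hkey t]
    exact le_of_lt (hu t)
  have hRd0 : Tendsto Rd atTop (nhds 0) := by
    apply squeeze_zero (fun j => by simp only [hRd]; positivity)
      (g := fun j => ε * (1 / 2 : ℝ) ^ j)
    · intro j
      simp only [hRd]
      rw [one_div, inv_pow, ← div_eq_mul_inv]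
      gcongr
      · norm_num
      · exact Nat.le_succ j
    · have := (tendsto_pow_atTop_nhds_zero_of_lt_one (by norm_num : (0:ℝ) ≤ 1/2)
        (by norm_num : (1/2:ℝ) < 1)).const_mul ε
      simpa using this
  have hCc : CauchyL dL C := h.cauchyL_of_chain hCstep hRd0
  have hDc : CauchyL dL D := h.cauchyL_of_chain hDstep hRd0
  have hDsmall : ∀ j, dL 1 (D j) < ε := by
    intro j
    have h1 := h.chain D Rd hDstep 0 j (Nat.zero_le j)
    rw [hD0] at h1
    have h2 : 0 < Rd j := by simp only [hRd]; positivity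
    have h3 : Rd 0 = ε / 2 := by simp only [hRd]; norm_num
    linarith
  -- the limit point
  obtain ⟨z, hz⟩ := cauchySeq_tendsto_of_complete (h.cauchySeq_smul hcX hisoX hCc x)
  refine ⟨z, C, D, hCc, hDc, hDsmall, hz, ?_⟩
  -- D j • y → z
  have hCD : ∀ j, dist (C j • x) (D j • y) = dist (a (ks j) • x) y := by
    intro j
    have h1 : C j • x = D j • (a (ks j) • x) := by
      rw [smul_smul]
      congr 1
      rw [hid j]
      simp only [hC]
      group
    rw [h1, dist_smul_smul hisoX]
  rw [tendsto_iff_dist_tendsto_zero]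
  apply squeeze_zero (fun j => dist_nonneg)
    (g := fun j : ℕ => 1 / ((j : ℝ) + 1) + dist (C j • x) z)
  · intro j
    have htri : dist (D j • y) z ≤ dist (D j • y) (C j • x) + dist (C j • x) z :=
      dist_triangle _ _ _
    have h1 : dist (D j • y) (C j • x) = dist (a (ks j) • x) y := by
      rw [dist_comm, hCD j]
    have h2 := haa (ks j)
    have h5 : ((j : ℝ) + 1) ≤ (Nat.cast (ks j) : ℝ) + 1 := by
      have h4 := hgej j
      have : (j : ℝ) ≤ (Nat.cast (ks j) : ℝ) := by exact_mod_cast h4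
      linarith
    have h3 := one_div_le_one_div_of_le (show (0:ℝ) < (j:ℝ) + 1 by positivity) h5
    linarith
  · have h1 : Tendsto (fun j : ℕ => (1 : ℝ) / (j + 1)) atTop (nhds 0) :=
      tendsto_one_div_add_atTop_nhds_zero_nat
    have h2 := tendsto_iff_dist_tendsto_zero.1 hz
    simpa using h1.add h2

end IsLeftMet


namespace IsLeftMet

/-- helper: `dL (c * w) w = dL 1 (w⁻¹ * c⁻¹ * w)`. -/
theorem dL_mul_left (h : IsLeftMet dL) (c w : G) :
    dL (c * w) w = dL 1 (w⁻¹ * c⁻¹ * w) := by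
  rw [← h.dL_inv_mul (c * w) w]
  congr 1
  group

/-- Composition lemma: a Cauchy witness from `x` to `y` can be updated along a small
Cauchy perturbation taking `y` to `z'`, staying close to the tail of the old witness. -/
theorem compose (h : IsLeftMet dL)
    (hcX : Continuous fun p : G × X => p.1 • p.2)
    (hisoX : ∀ g : G, Isometry fun x : X => g • x)
    {W : ℕ → G} (hW : CauchyL dL W) {κ : ℝ} (hκ : 0 < κ) :
    ∃ ε > (0 : ℝ), ∃ N₀ : ℕ, ∀ C : ℕ → G, CauchyL dL C → (∀ k, dL 1 (C k) < ε) →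
      ∀ (x y z' : X), Tendsto (fun n => W n • x) atTop (nhds y) →
        Tendsto (fun n => C n • y) atTop (nhds z') →
          ∃ W' : ℕ → G, CauchyL dL W' ∧ Tendsto (fun n => W' n • x) atTop (nhds z') ∧
            ∀ k l : ℕ, N₀ ≤ l → dL (W' k) (W l) < κ := by
  classical
  obtain ⟨ε, hεpos, N₁, hconj⟩ := h.conj_tail hW (show (0:ℝ) < κ / 2 by linarith)
  obtain ⟨N₂, htail⟩ := hW (κ / 4) (by linarith)
  set N₀ := max N₁ N₂ with hN₀
  refine ⟨ε, hεpos, N₀, ?_⟩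
  intro C hC hCsmall x y z' hWx hCy
  -- choose indices far enough in W
  have hm : ∀ k : ℕ, ∃ m : ℕ, N₀ ≤ m ∧ k ≤ m ∧ dist (W m • x) y < 1 / (k + 1) := by
    intro k
    rcases (Metric.tendsto_atTop.1 hWx) (1 / (k + 1)) (by positivity) with ⟨M, hM⟩
    refine ⟨max (max N₀ k) M, le_trans (le_max_left _ _) (le_max_left _ _),
      le_trans (le_max_right _ _) (le_max_left _ _), hM _ (le_max_right _ _)⟩
  choose m hm₁ hm₂ hm₃ using hm
  set W' : ℕ → G := fun k => C k * W (m k) with hW'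
  have hinvsmall : ∀ k, dL 1 (C k)⁻¹ < ε := fun k => by
    rw [h.one_inv]; exact hCsmall k
  refine ⟨W', ?_, ?_, ?_⟩
  · -- Cauchy
    intro γ hγ
    obtain ⟨ε₁, hε₁pos, N₃, hconj₁⟩ := h.conj_tail hW (show (0:ℝ) < γ / 3 by linarith)
    obtain ⟨N₄, htail₄⟩ := hW (γ / 3) (by linarith)
    obtain ⟨N₅, hC₅⟩ := hC ε₁ hε₁pos
    refine ⟨max (max N₃ N₄) N₅, fun k l hk hl => ?_⟩
    have hkN₃ : N₃ ≤ k := le_trans (le_max_left _ _) (le_trans (le_max_left _ _) hk)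
    have hkN₄ : N₄ ≤ k := le_trans (le_max_right _ _) (le_trans (le_max_left _ _) hk)
    have hkN₅ : N₅ ≤ k := le_trans (le_max_right _ _) hk
    have hlN₃ : N₃ ≤ l := le_trans (le_max_left _ _) (le_trans (le_max_left _ _) hl)
    have hlN₄ : N₄ ≤ l := le_trans (le_max_right _ _) (le_trans (le_max_left _ _) hl)
    have hlN₅ : N₅ ≤ l := le_trans (le_max_right _ _) hl
    have t1 : dL (W' k) (C k * W (m l)) = dL (W (m k)) (W (m l)) := by
      rw [hW']
      exact h.inv _ _ _
    have t1' : dL (W (m k)) (W (m l)) < γ / 3 :=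
      htail₄ (m k) (m l) (le_trans hkN₄ (hm₂ k)) (le_trans hlN₄ (hm₂ l))
    have t2 : dL (C k * W (m l)) (W' l) = dL 1 ((W (m l))⁻¹ * ((C k)⁻¹ * C l) * W (m l)) := by
      rw [hW', ← h.dL_inv_mul]
      congr 1
      group
    have t2' : dL 1 ((W (m l))⁻¹ * ((C k)⁻¹ * C l) * W (m l)) < γ / 3 := by
      apply hconj₁
      · rw [h.dL_inv_mul]
        exact hC₅ k l hkN₅ hlN₅
      · exact le_trans hlN₃ (le_trans (hm₂ l) (le_refl _)) |>.trans (le_refl _) |>.trans (le_refl _)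
    have htri := h.tri (W' k) (C k * W (m l)) (W' l)
    rw [t1] at htri
    rw [t2] at htri
    linarith
  · -- convergence
    rw [tendsto_iff_dist_tendsto_zero]
    apply squeeze_zero (fun k => dist_nonneg)
      (g := fun k : ℕ => 1 / ((k : ℝ) + 1) + dist (C k • y) z')
    · intro k
      have h1 : dist (W' k • x) (C k • y) = dist (W (m k) • x) y := by
        have : W' k • x = C k • (W (m k) • x) := by
          rw [hW', mul_smul]
        rw [this, dist_smul_smul hisoX]
      have htri := dist_triangle (W' k • x) (C k • y) z'
      have h2 := hm₃ k
      rw [h1] at htri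
      linarith
    · have h1 : Tendsto (fun k : ℕ => (1 : ℝ) / (k + 1)) atTop (nhds 0) :=
        tendsto_one_div_add_atTop_nhds_zero_nat
      have h2 := tendsto_iff_dist_tendsto_zero.1 hCy
      simpa using h1.add h2
  · -- anchor bound
    intro k l hl
    have hlN₂ : N₂ ≤ l := le_trans (le_max_right _ _) hl
    have hmkN₁ : N₁ ≤ m k := le_trans (le_max_left _ _) (hm₁ k)
    have hmkN₂ : N₂ ≤ m k := le_trans (le_max_right _ _) (hm₁ k)
    have t1 : dL (W' k) (W (m k)) < κ / 2 := by
      rw [hW', h.dL_mul_left]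
      exact hconj (C k)⁻¹ (hinvsmall k) (m k) hmkN₁
    have t2 : dL (W (m k)) (W l) < κ / 4 := htail (m k) l hmkN₂ hlN₂
    have htri := h.tri (W' k) (W (m k)) (W l)
    linarith

end IsLeftMet

end Aux


/-- Amalgamation over the left completion: given a Roelcke-precompact Polish group `G`
with a compatible left-invariant metric `dL`, a minimal complete `G`-space `X` and points
`x i`, there are a point `z` and `dL`-Cauchy sequences `g i n` in `G` with
`g i n • x i → z`. -/
theorem stmt_8 (G : Type*) [Group G] [TopologicalSpace G] [IsTopologicalGroup G]
    [PolishSpace G] (hRP : RoelckePrecompact G)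
    (dL : G → G → ℝ)
    (hd0 : ∀ g h : G, dL g h = 0 ↔ g = h)
    (hdsymm : ∀ g h : G, dL g h = dL h g)
    (hdtri : ∀ g h k : G, dL g k ≤ dL g h + dL h k)
    (hdinv : ∀ g g' h : G, dL (h * g) (h * g') = dL g g')
    (hdtop : ∀ (g : G) (s : Set G), s ∈ nhds g ↔ ∃ ε > (0 : ℝ), {h | dL g h < ε} ⊆ s)
    (X : Type*) [MetricSpace X] [CompleteSpace X] [Nonempty X] [MulAction G X]
    (hcX : Continuous fun p : G × X => p.1 • p.2)
    (hisoX : ∀ g : G, Isometry fun x : X => g • x)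
    (hminX : ∀ x : X, Dense (MulAction.orbit G x))
    (x : ℕ → X) :
    ∃ z : X, ∀ i : ℕ, ∃ g : ℕ → G,
      (∀ ε > (0 : ℝ), ∃ N : ℕ, ∀ m n : ℕ, N ≤ m → N ≤ n → dL (g m) (g n) < ε) ∧
      Tendsto (fun n => g n • x i) atTop (nhds z) := by
  classical
  have hm : IsLeftMet dL := ⟨hd0, hdsymm, hdtri, hdinv, hdtop⟩
  set pw : ℕ → ℝ := fun n => (1 / 2 : ℝ) ^ n with hpw
  have pwpos : ∀ n, 0 < pw n := fun n => by positivity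
  -- the invariant and the link between consecutive stages
  set Inv : ℕ → X × (ℕ → ℕ → G) → Prop := fun n r =>
    ∀ i ≤ n, CauchyL dL (r.2 i) ∧ Tendsto (fun k => r.2 i k • x i) atTop (nhds r.1)
    with hInv
  set Link : ℕ → X × (ℕ → ℕ → G) → X × (ℕ → ℕ → G) → Prop := fun n r r' =>
    dist r'.1 r.1 ≤ pw n ∧
    ∀ i ≤ n, ∃ N : ℕ, ∀ k l : ℕ, N ≤ l → dL (r'.2 i k) (r.2 i l) < pw n
    with hLinkdef
  -- the recursion step
  have hstepEx : ∀ n r, Inv n r → ∃ r', Inv (n + 1) r' ∧ Link n r r' := by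
    intro n r hr
    -- per-index composition data
    have hBi : ∀ i : ℕ, ∃ ε : ℝ, 0 < ε ∧ (i ≤ n → ∃ N₀ : ℕ,
        ∀ C : ℕ → G, CauchyL dL C → (∀ k, dL 1 (C k) < ε) →
          ∀ z' : X, Tendsto (fun k => C k • r.1) atTop (nhds z') →
            ∃ W' : ℕ → G, CauchyL dL W' ∧
              Tendsto (fun k => W' k • x i) atTop (nhds z') ∧
              ∀ k l : ℕ, N₀ ≤ l → dL (W' k) (r.2 i l) < pw n) := by
      intro i
      by_cases hi : i ≤ n
      · obtain ⟨ε, hε, N₀, hP⟩ := hm.compose hcX hisoX (hr i hi).1 (pwpos n)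
        exact ⟨ε, hε, fun _ => ⟨N₀, fun C hC hCs z' hz' =>
          hP C hC hCs (x i) r.1 z' (hr i hi).2 hz'⟩⟩
      · exact ⟨1, one_pos, fun hcon => absurd hcon hi⟩
    choose εB hεBpos hεB using hBi
    obtain ⟨εa, hεa, hact⟩ := hm.act_modulus hcX r.1 (pwpos n)
    have hne : (Finset.range (n + 1)).Nonempty := ⟨0, by simp⟩
    set εn := min εa ((Finset.range (n + 1)).inf' hne εB) with hεn
    have hεnpos : 0 < εn :=
      lt_min hεa ((Finset.lt_inf'_iff hne).2 fun i _ => hεBpos i)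
    have hεnB : ∀ i ≤ n, εn ≤ εB i := fun i hi =>
      le_trans (min_le_right _ _) (Finset.inf'_le εB (Finset.mem_range.2 (Nat.lt_succ_of_le hi)))
    -- amalgamate the new point
    obtain ⟨z', C, D, hCc, hDc, hDsm, hCx, hDy⟩ :=
      hm.amalgam hRP hcX hisoX (x (n + 1)) r.1 (hminX (x (n + 1))) hεnpos
    -- updated witnesses for old indices
    have hWi : ∀ i : ℕ, ∃ Wi : ℕ → G, i ≤ n →
        CauchyL dL Wi ∧ Tendsto (fun k => Wi k • x i) atTop (nhds z') ∧
        ∃ N : ℕ, ∀ k l : ℕ, N ≤ l → dL (Wi k) (r.2 i l) < pw n := by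
      intro i
      by_cases hi : i ≤ n
      · obtain ⟨N₀, hP⟩ := hεB i hi
        have hDsm' : ∀ k, dL 1 (D k) < εB i :=
          fun k => lt_of_lt_of_le (hDsm k) (hεnB i hi)
        obtain ⟨W', h1, h2, h3⟩ := hP D hDc hDsm' z' hDy
        exact ⟨W', fun _ => ⟨h1, h2, N₀, h3⟩⟩
      · exact ⟨fun _ => 1, fun hcon => absurd hcon hi⟩
    choose W' hW' using hWi
    refine ⟨(z', fun i => if i = n + 1 then C else W' i), ?_, ?_, ?_⟩
    · -- invariant
      intro i hi
      by_cases hieq : i = n + 1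
      · subst hieq
        simpa using And.intro hCc hCx
      · have hile : i ≤ n := by omega
        have := hW' i hile
        simp only [hieq, if_false]
        exact ⟨this.1, this.2.1⟩
    · -- distance bound
      have hlim : Tendsto (fun k => dist (D k • r.1) r.1) atTop (nhds (dist z' r.1)) :=
        hDy.dist tendsto_const_nhds
      apply le_of_tendsto hlim
      filter_upwards with k
      exact le_of_lt (hact (D k) (lt_of_lt_of_le (hDsm k) (min_le_left _ _)))
    · -- link
      intro i hi
      have hine : ¬(i = n + 1) := by omega
      obtain ⟨N, hN⟩ := (hW' i hi).2.2
      exact ⟨N, fun k l hl => by simpa [hine] using hN k l hl⟩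
  -- build the sequence of stages
  have base : Inv 0 ((x 0, fun _ _ => (1 : G)) : X × (ℕ → ℕ → G)) := by
    intro i hi
    constructor
    · intro ε hε
      exact ⟨0, fun m n _ _ => by simpa [hm.refl] using hε⟩
    · have : i = 0 := Nat.le_zero.1 hi
      subst this
      simpa [one_smul] using (tendsto_const_nhds : Tendsto (fun _ : ℕ => x 0) atTop (nhds (x 0)))
  let F : ∀ n : ℕ, {r : X × (ℕ → ℕ → G) // Inv n r} := fun n =>
    Nat.rec ⟨(x 0, fun _ _ => (1 : G)), base⟩
      (fun n p => ⟨(hstepEx n p.1 p.2).choose, (hstepEx n p.1 p.2).choose_spec.1⟩) n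
  have hLink : ∀ n, Link n (F n).1 (F (n + 1)).1 :=
    fun n => (hstepEx n (F n).1 (F n).2).choose_spec.2
  set zs : ℕ → X := fun n => (F n).1.1 with hzsdef
  have hzcau : CauchySeq zs := by
    apply cauchySeq_of_le_geometric (1 / 2 : ℝ) 1 (by norm_num)
    intro n
    have hd : dist (zs (n + 1)) (zs n) ≤ pw n := (hLink n).1
    rw [dist_comm]
    calc dist (zs (n + 1)) (zs n) ≤ pw n := hd
      _ = 1 * (1 / 2 : ℝ) ^ n := by rw [hpw]; ring
  obtain ⟨z, hz⟩ := cauchySeq_tendsto_of_complete hzcau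
  refine ⟨z, fun i => ?_⟩
  -- stage witnesses for index i
  set Wst : ℕ → ℕ → G := fun t => (F (i + t)).1.2 i with hWst
  have hWc : ∀ t, CauchyL dL (Wst t) := fun t => ((F (i + t)).2 i (Nat.le_add_right i t)).1
  have hWconv : ∀ t, Tendsto (fun k => Wst t k • x i) atTop (nhds (zs (i + t))) :=
    fun t => ((F (i + t)).2 i (Nat.le_add_right i t)).2
  have hlinki : ∀ t, ∃ N : ℕ, ∀ k l : ℕ, N ≤ l →
      dL (Wst (t + 1) k) (Wst t l) < pw (i + t) := by
    intro t
    obtain ⟨N, hN⟩ := (hLink (i + t)).2 i (Nat.le_add_right i t)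
    refine ⟨N, fun k l hl => ?_⟩
    have : (F (i + t + 1)).1.2 i k = Wst (t + 1) k := by
      rw [hWst]
      congr 2
    rw [← this]
    exact hN k l hl
  choose NL hNL using hlinki
  -- diagonal choice
  have hkt : ∀ t : ℕ, ∃ kt : ℕ, NL t ≤ kt ∧ dist (Wst t kt • x i) (zs (i + t)) < pw t := by
    intro t
    obtain ⟨M, hM⟩ := Metric.tendsto_atTop.1 (hWconv t) (pw t) (pwpos t)
    exact ⟨max (NL t) M, le_max_left _ _, hM _ (le_max_right _ _)⟩
  choose kt hkt1 hkt2 using hkt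
  set E : ℕ → G := fun t => Wst t (kt t) with hE
  have hEstep : ∀ t, dL (E t) (E (t + 1)) ≤ 2 * pw (i + t) - 2 * pw (i + (t + 1)) := by
    intro t
    have h1 : dL (Wst (t + 1) (kt (t + 1))) (Wst t (kt t)) < pw (i + t) :=
      hNL t (kt (t + 1)) (kt t) (hkt1 t)
    have h2 : 2 * pw (i + t) - 2 * pw (i + (t + 1)) = pw (i + t) := by
      simp only [hpw]
      rw [show i + (t + 1) = (i + t) + 1 by omega, pow_succ]
      ring
    rw [h2, hm.symm]
    exact le_of_lt h1
  have hRE0 : Tendsto (fun t => 2 * pw (i + t)) atTop (nhds 0) := by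
    have h1 : (fun t => 2 * pw (i + t)) = fun t => (2 * pw i) * (1 / 2 : ℝ) ^ t := by
      funext t
      simp only [hpw]
      rw [pow_add]
      ring
    rw [h1]
    have := (tendsto_pow_atTop_nhds_zero_of_lt_one (by norm_num : (0:ℝ) ≤ 1/2)
      (by norm_num : (1/2:ℝ) < 1)).const_mul (2 * pw i)
    simpa using this
  have hEc : CauchyL dL E := hm.cauchyL_of_chain hEstep hRE0
  refine ⟨E, hEc, ?_⟩
  rw [tendsto_iff_dist_tendsto_zero]
  apply squeeze_zero (fun t => dist_nonneg)
    (g := fun t : ℕ => pw t + dist (zs (i + t)) z)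
  · intro t
    have htri := dist_triangle (E t • x i) (zs (i + t)) z
    have h1 := hkt2 t
    simp only [hE] at htri ⊢
    linarith
  · have h1 : Tendsto pw atTop (nhds 0) :=
      tendsto_pow_atTop_nhds_zero_of_lt_one (by norm_num) (by norm_num)
    have h2 : Tendsto (fun t : ℕ => i + t) atTop atTop := by
      apply StrictMono.tendsto_atTop
      intro a b hab
      show i + a < i + b
      omega
    have h3 : Tendsto (fun t => dist (zs (i + t)) z) atTop (nhds 0) :=
      (tendsto_iff_dist_tendsto_zero.1 (hz.comp h2))
    simpa using h1.add h3
end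

section
/- The group Homeo⁺[0,1] of homeomorphisms of [0,1] fixing the endpoints, with the topology of uniform convergence, is Roelcke-precompact: for every nonempty open set U ⊆ Homeo⁺[0,1] there exists a finite set F ⊆ Homeo⁺[0,1] such that U·F·U = Homeo⁺[0,1]. -/
/-- The group `Homeo⁺[0,1]` of homeomorphisms of `[0,1]` fixing the endpoints. -/
def HomeoPlus : Type :=
  {g : unitInterval ≃ₜ unitInterval // g 0 = 0 ∧ g 1 = 1}

instance : Group HomeoPlus where
  mul f g := ⟨g.1.trans f.1, by
    constructor
    · show f.1 (g.1 0) = 0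
      rw [g.2.1, f.2.1]
    · show f.1 (g.1 1) = 1
      rw [g.2.2, f.2.2]⟩
  one := ⟨Homeomorph.refl _, rfl, rfl⟩
  inv f := ⟨f.1.symm,
    f.1.toEquiv.symm_apply_eq.mpr f.2.1.symm,
    f.1.toEquiv.symm_apply_eq.mpr f.2.2.symm⟩
  mul_assoc a b c := Subtype.ext (Homeomorph.ext fun _ => rfl)
  one_mul a := Subtype.ext (Homeomorph.ext fun _ => rfl)
  mul_one a := Subtype.ext (Homeomorph.ext fun _ => rfl)
  inv_mul_cancel a := Subtype.ext (Homeomorph.ext fun x => a.1.symm_apply_apply x)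

/-- The topology of uniform convergence on `Homeo⁺[0,1]`, induced from the
sup metric on `C([0,1], [0,1])`. -/
instance : TopologicalSpace HomeoPlus :=
  TopologicalSpace.induced
    (fun g : HomeoPlus => (⟨⇑g.1, g.1.continuous⟩ : C(unitInterval, unitInterval)))
    inferInstance


namespace StmtAux
open Set

lemma homeo_strictMono (g : HomeoPlus) : StrictMono (g.1 : unitInterval → unitInterval) := by
  set f : ℝ → ℝ := fun x => ((g.1 (projIcc 0 1 zero_le_one x) : unitInterval) : ℝ) with hf
  have key : ∀ (x : ℝ) (hx : x ∈ Icc (0:ℝ) 1), f x = ((g.1 ⟨x, hx⟩ : unitInterval) : ℝ) := by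
    intro x hx
    rw [hf]
    simp only [projIcc_of_mem zero_le_one hx]
  have hc : ContinuousOn f (Icc 0 1) :=
    (continuous_subtype_val.comp (g.1.continuous.comp continuous_projIcc)).continuousOn
  have hinj : InjOn f (Icc 0 1) := by
    intro x hx y hy hxy
    rw [key x hx, key y hy] at hxy
    have h1 : g.1 ⟨x, hx⟩ = g.1 ⟨y, hy⟩ := Subtype.ext hxy
    simpa using congrArg Subtype.val (g.1.injective h1)
  have h01 : f 0 ≤ f 1 := by
    rw [key 0 (by norm_num), key 1 (by norm_num)]
    have e0 : (⟨(0:ℝ), by norm_num⟩ : unitInterval) = 0 := rfl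
    have e1 : (⟨(1:ℝ), by norm_num⟩ : unitInterval) = 1 := rfl
    rw [e0, e1, g.2.1, g.2.2]
    norm_num
  have hsm := ContinuousOn.strictMonoOn_of_injOn_Icc zero_le_one h01 hc hinj
  intro x y hxy
  have hlt : (x:ℝ) < (y:ℝ) := hxy
  have h2 := hsm x.2 y.2 hlt
  rw [key _ x.2, key _ y.2] at h2
  simpa [Subtype.coe_lt_coe] using h2


noncomputable section

def uMap (g : HomeoPlus) (x : unitInterval) : ℝ := (x : ℝ) + ((g.1 x : unitInterval) : ℝ)

lemma uMap_strictMono (g : HomeoPlus) : StrictMono (uMap g) := by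
  intro x y hxy
  exact add_lt_add (by exact_mod_cast hxy) (by exact_mod_cast homeo_strictMono g hxy)

lemma uMap_mem (g : HomeoPlus) (x : unitInterval) : uMap g x ∈ Icc (0:ℝ) 2 := by
  have h1 := x.2
  have h2 := (g.1 x).2
  simp only [unitInterval, mem_Icc] at h1 h2 ⊢
  simp only [uMap]
  constructor <;> [linarith; linarith]

lemma uMap_zero (g : HomeoPlus) : uMap g 0 = 0 := by
  have : ((g.1 0 : unitInterval) : ℝ) = 0 := by rw [g.2.1]; rfl
  simp [uMap, this]

lemma uMap_one (g : HomeoPlus) : uMap g 1 = 2 := by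
  have : ((g.1 1 : unitInterval) : ℝ) = 1 := by rw [g.2.2]; rfl
  simp [uMap, this]
  norm_num

lemma dist_le_uMap (g : HomeoPlus) (x y : unitInterval) :
    |(x:ℝ) - (y:ℝ)| ≤ |uMap g x - uMap g y| := by
  rcases le_total x y with h | h
  · have h1 : (x:ℝ) ≤ y := h
    have h2 : ((g.1 x : unitInterval):ℝ) ≤ ((g.1 y : unitInterval):ℝ) := by
      rcases eq_or_lt_of_le h with rfl | hlt
      · exact le_refl _
      · exact_mod_cast le_of_lt (homeo_strictMono g hlt)
    rw [abs_sub_comm, abs_sub_comm (uMap g x)]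
    rw [abs_of_nonneg (by linarith), abs_of_nonneg (by simp [uMap]; linarith)]
    simp [uMap]; linarith
  · have h1 : (y:ℝ) ≤ x := h
    have h2 : ((g.1 y : unitInterval):ℝ) ≤ ((g.1 x : unitInterval):ℝ) := by
      rcases eq_or_lt_of_le h with rfl | hlt
      · exact le_refl _
      · exact_mod_cast le_of_lt (homeo_strictMono g hlt)
    rw [abs_of_nonneg (by linarith), abs_of_nonneg (by simp [uMap]; linarith)]
    simp [uMap]; linarith

lemma uMap_surj (g : HomeoPlus) : ∀ s ∈ Icc (0:ℝ) 2, ∃ x, uMap g x = s := by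
  intro s hs
  have hc : Continuous (uMap g) :=
    continuous_subtype_val.add (continuous_subtype_val.comp g.1.continuous)
  have := intermediate_value_univ (0 : unitInterval) 1 hc
  rw [uMap_zero, uMap_one] at this
  exact this hs

def uEquiv (g : HomeoPlus) : unitInterval ≃ Icc (0:ℝ) 2 :=
  Equiv.ofBijective (fun x => ⟨uMap g x, uMap_mem g x⟩)
    ⟨fun x y hxy => (uMap_strictMono g).injective (by exact_mod_cast congrArg Subtype.val hxy),
     fun s => by
      obtain ⟨x, hx⟩ := uMap_surj g s s.2
      exact ⟨x, Subtype.ext hx⟩⟩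

def uHomeo (g : HomeoPlus) : unitInterval ≃ₜ Icc (0:ℝ) 2 :=
  Continuous.homeoOfEquivCompactToT2 (f := uEquiv g)
    (by
      apply Continuous.subtype_mk
      exact continuous_subtype_val.add (continuous_subtype_val.comp g.1.continuous))

lemma uHomeo_apply (g : HomeoPlus) (x : unitInterval) :
    ((uHomeo g x : Icc (0:ℝ) 2) : ℝ) = uMap g x := rfl

def psi (g : HomeoPlus) : Icc (0:ℝ) 2 → unitInterval := fun s => (uHomeo g).symm s

lemma uMap_psi (g : HomeoPlus) (s : Icc (0:ℝ) 2) : uMap g (psi g s) = s := by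
  have := (uHomeo g).apply_symm_apply s
  calc uMap g (psi g s) = ((uHomeo g (psi g s) : Icc (0:ℝ) 2) : ℝ) := rfl
    _ = s := by rw [show uHomeo g (psi g s) = s from this]

lemma psi_uMap (g : HomeoPlus) (x : unitInterval) (h : uMap g x ∈ Icc (0:ℝ) 2) :
    psi g ⟨uMap g x, h⟩ = x := by
  have : (⟨uMap g x, h⟩ : Icc (0:ℝ) 2) = uHomeo g x := rfl
  rw [psi, this, Homeomorph.symm_apply_apply]

lemma psi_lipschitz (g : HomeoPlus) (s t : Icc (0:ℝ) 2) :
    |((psi g s : unitInterval) : ℝ) - ((psi g t : unitInterval) : ℝ)| ≤ |(s:ℝ) - (t:ℝ)| := by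
  have := dist_le_uMap g (psi g s) (psi g t)
  rwa [uMap_psi, uMap_psi] at this


-- basic group facts
lemma mul_apply (a b : HomeoPlus) (x : unitInterval) : (a * b).1 x = a.1 (b.1 x) := rfl
lemma inv_apply (a : HomeoPlus) (x : unitInterval) : (a⁻¹).1 x = a.1.symm x := rfl

lemma decomp (g h : HomeoPlus) (δ : ℝ)
    (hδ : ∀ s : Icc (0:ℝ) 2, |((psi g s : unitInterval) : ℝ) - ((psi h s : unitInterval) : ℝ)| ≤ δ) :
    ∃ a b : HomeoPlus, g = a * h * b ∧ (∀ y, |((a.1 y : unitInterval) : ℝ) - (y:ℝ)| ≤ δ) ∧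
      (∀ x, |((b.1 x : unitInterval) : ℝ) - (x:ℝ)| ≤ δ) := by
  have hub : ∀ (k : HomeoPlus) (s : Icc (0:ℝ) 2), (uHomeo k).symm s = psi k s := fun _ _ => rfl
  -- the homeomorphism b
  set bH : unitInterval ≃ₜ unitInterval := (uHomeo g).trans (uHomeo h).symm with hbH
  have hbx : ∀ x : unitInterval, bH x = psi h ⟨uMap g x, uMap_mem g x⟩ := by
    intro x
    have : uHomeo g x = ⟨uMap g x, uMap_mem g x⟩ := Subtype.ext (uHomeo_apply g x)
    simp [bH, Homeomorph.trans_apply, this, psi]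
  have huMapb : ∀ x : unitInterval, uMap h (bH x) = uMap g x := by
    intro x
    rw [hbx x, uMap_psi]
  have hbx_close : ∀ x : unitInterval, |((bH x : unitInterval) : ℝ) - (x:ℝ)| ≤ δ := by
    intro x
    have h1 := hδ ⟨uMap g x, uMap_mem g x⟩
    have h2 : psi g ⟨uMap g x, uMap_mem g x⟩ = x := by
      have : (⟨uMap g x, uMap_mem g x⟩ : Icc (0:ℝ) 2) = uHomeo g x :=
        Subtype.ext (uHomeo_apply g x).symm
      rw [psi, this, Homeomorph.symm_apply_apply]
    rw [h2] at h1
    rw [abs_sub_comm] at h1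
    simpa [hbx x] using h1
  have hb0 : bH 0 = 0 := by
    have h0g : uHomeo g 0 = ⟨0, by norm_num⟩ := Subtype.ext (by rw [uHomeo_apply, uMap_zero])
    have h0h : uHomeo h 0 = ⟨0, by norm_num⟩ := Subtype.ext (by rw [uHomeo_apply, uMap_zero])
    simp [bH, Homeomorph.trans_apply, h0g, ← h0h]
  have hb1 : bH 1 = 1 := by
    have h1g : uHomeo g 1 = ⟨2, by norm_num⟩ := Subtype.ext (by rw [uHomeo_apply, uMap_one])
    have h1h : uHomeo h 1 = ⟨2, by norm_num⟩ := Subtype.ext (by rw [uHomeo_apply, uMap_one])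
    simp [bH, Homeomorph.trans_apply, h1g, ← h1h]
  set b : HomeoPlus := ⟨bH, hb0, hb1⟩ with hbdef
  -- h ∘ b is close to g
  have hhb : ∀ x : unitInterval, |((h.1 (bH x) : unitInterval) : ℝ) - ((g.1 x : unitInterval) : ℝ)| ≤ δ := by
    intro x
    have := huMapb x
    simp only [uMap] at this
    have heq : ((h.1 (bH x) : unitInterval) : ℝ) - ((g.1 x : unitInterval) : ℝ) = (x:ℝ) - (bH x : ℝ) := by
      linarith
    rw [heq, abs_sub_comm]
    exact hbx_close x
  refine ⟨g * b⁻¹ * h⁻¹, b, by group, ?_, ?_⟩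
  · intro y
    set x : unitInterval := b.1.symm (h.1.symm y) with hx
    have hxy : h.1 (b.1 x) = y := by
      rw [hx, Homeomorph.apply_symm_apply, Homeomorph.apply_symm_apply]
    have happ : ((g * b⁻¹ * h⁻¹).1 y : unitInterval) = g.1 x := by
      rw [mul_apply, mul_apply, inv_apply, inv_apply, hx]
    rw [happ, ← hxy, abs_sub_comm]
    exact hhb x
  · intro x
    exact hbx_close x


variable {n : ℕ}

def grid (n : ℕ) (hn : 0 < n) (k : Fin (2*n+1)) : Icc (0:ℝ) 2 := by
  refine ⟨(k : ℕ) / (n : ℝ), ?_, ?_⟩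
  · positivity
  · rw [div_le_iff₀ (by positivity)]
    have : (k : ℕ) ≤ 2 * n := by omega
    push_cast
    calc ((k:ℕ) : ℝ) ≤ ((2*n : ℕ) : ℝ) := by exact_mod_cast this
      _ = 2 * n := by push_cast; ring

def pat (n : ℕ) (hn : 0 < n) (g : HomeoPlus) : Fin (2*n+1) → Fin (n+1) :=
  fun k => ⟨min n ⌊(n : ℝ) * ((psi g (grid n hn k) : unitInterval) : ℝ)⌋₊, by omega⟩

lemma bracket (v : unitInterval) (hn : 0 < n) (m : ℕ) (hm : m = min n ⌊(n:ℝ) * (v:ℝ)⌋₊) :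
    (m : ℝ)/n ≤ (v:ℝ) ∧ (v:ℝ) ≤ (m+1)/n := by
  have hv0 : (0:ℝ) ≤ v := v.2.1
  have hv1 : (v:ℝ) ≤ 1 := v.2.2
  have hnR : (0:ℝ) < n := by exact_mod_cast hn
  constructor
  · rw [div_le_iff₀ hnR]
    have h1 : (m : ℕ) ≤ ⌊(n:ℝ) * (v:ℝ)⌋₊ := by omega
    have h2 : (⌊(n:ℝ) * (v:ℝ)⌋₊ : ℝ) ≤ (n:ℝ) * v := Nat.floor_le (by positivity)
    calc (m:ℝ) ≤ (⌊(n:ℝ) * (v:ℝ)⌋₊ : ℝ) := by exact_mod_cast h1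
      _ ≤ (n:ℝ) * v := h2
      _ = v * n := by ring
  · rcases lt_or_ge m n with hmn | hmn
    · have hfl : ⌊(n:ℝ) * (v:ℝ)⌋₊ = m := by omega
      have := Nat.lt_floor_add_one ((n:ℝ) * v)
      rw [hfl] at this
      rw [le_div_iff₀ hnR]
      have : (n:ℝ) * v < m + 1 := by exact_mod_cast this
      linarith
    · have hmn' : m = n := by omega
      rw [hmn', le_div_iff₀ hnR]
      have : ((n:ℝ) + 1) ≥ n := by linarith
      nlinarith

lemma close_of_pat_eq (hn : 0 < n) (g h : HomeoPlus) (hp : pat n hn g = pat n hn h) :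
    ∀ s : Icc (0:ℝ) 2, |((psi g s : unitInterval) : ℝ) - ((psi h s : unitInterval) : ℝ)| ≤ 3 / n := by
  have hnR : (0:ℝ) < n := by exact_mod_cast hn
  have hgrid : ∀ k : Fin (2*n+1),
      |((psi g (grid n hn k) : unitInterval) : ℝ) - ((psi h (grid n hn k) : unitInterval) : ℝ)| ≤ 1 / n := by
    intro k
    have hk := congrFun hp k
    simp only [pat, Fin.mk.injEq] at hk
    obtain ⟨hg1, hg2⟩ := bracket (psi g (grid n hn k)) hn _ rfl
    obtain ⟨hh1, hh2⟩ := bracket (psi h (grid n hn k)) hn _ rfl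
    rw [hk] at hg1 hg2
    have hdiff : ((↑(min n ⌊(n:ℝ) * ((psi h (grid n hn k) : unitInterval) : ℝ)⌋₊) : ℝ) + 1) / n
        - (↑(min n ⌊(n:ℝ) * ((psi h (grid n hn k) : unitInterval) : ℝ)⌋₊) : ℝ) / n = 1 / n := by
      field_simp; ring
    rw [abs_le]
    constructor <;> [linarith; linarith]
  intro s
  have hs0 : (0:ℝ) ≤ s := s.2.1
  have hs2 : (s:ℝ) ≤ 2 := s.2.2
  set k0 : ℕ := ⌊(n:ℝ) * (s:ℝ)⌋₊ with hk0
  have hk0le : k0 ≤ 2 * n := by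
    have : (n:ℝ) * s ≤ ((2*n : ℕ) : ℝ) := by push_cast; nlinarith
    calc k0 ≤ ⌊((2*n:ℕ):ℝ)⌋₊ := Nat.floor_le_floor this
      _ = 2*n := Nat.floor_natCast _
  set k : Fin (2*n+1) := ⟨k0, by omega⟩ with hk
  have hgridk : ((grid n hn k : Icc (0:ℝ) 2) : ℝ) = (k0 : ℝ) / n := rfl
  have hclose : |(s:ℝ) - ((grid n hn k : Icc (0:ℝ) 2) : ℝ)| ≤ 1 / n := by
    rw [hgridk]
    have h1 : (k0 : ℝ) ≤ (n:ℝ) * s := Nat.floor_le (by positivity)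
    have h2 : (n:ℝ) * s < k0 + 1 := Nat.lt_floor_add_one _
    have e1 : (k0:ℝ)/n ≤ s := by rw [div_le_iff₀ hnR]; linarith
    have e2 : (s:ℝ) ≤ ((k0:ℝ)+1)/n := by rw [le_div_iff₀ hnR]; linarith
    have hdiff : ((k0:ℝ)+1)/n - (k0:ℝ)/n = 1/n := by field_simp; ring
    rw [abs_le]
    constructor <;> [linarith; linarith]
  have lg := psi_lipschitz g s (grid n hn k)
  have lh := psi_lipschitz h (grid n hn k) s
  have lgg := hgrid k
  have e1 : |((psi g s : unitInterval) : ℝ) - ((psi h s : unitInterval) : ℝ)| ≤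
      |((psi g s : unitInterval) : ℝ) - ((psi g (grid n hn k) : unitInterval) : ℝ)| +
      |((psi g (grid n hn k) : unitInterval) : ℝ) - ((psi h (grid n hn k) : unitInterval) : ℝ)| +
      |((psi h (grid n hn k) : unitInterval) : ℝ) - ((psi h s : unitInterval) : ℝ)| := by
    have := abs_sub_le ((psi g s : unitInterval) : ℝ) ((psi g (grid n hn k) : unitInterval) : ℝ)
      ((psi h s : unitInterval) : ℝ)
    have := abs_sub_le ((psi g (grid n hn k) : unitInterval) : ℝ)
      ((psi h (grid n hn k) : unitInterval) : ℝ) ((psi h s : unitInterval) : ℝ)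
    linarith [abs_sub_le ((psi g s : unitInterval) : ℝ) ((psi g (grid n hn k) : unitInterval) : ℝ)
      ((psi h s : unitInterval) : ℝ), abs_sub_le ((psi g (grid n hn k) : unitInterval) : ℝ)
      ((psi h (grid n hn k) : unitInterval) : ℝ) ((psi h s : unitInterval) : ℝ)]
  have habs : |(((grid n hn k) : Icc (0:ℝ) 2) : ℝ) - (s:ℝ)| ≤ 1 / n := by
    rw [abs_sub_comm]; exact hclose
  have : (3:ℝ)/n = 1/n + 1/n + 1/n := by ring
  rw [this]
  calc |((psi g s : unitInterval) : ℝ) - ((psi h s : unitInterval) : ℝ)| ≤ _ := e1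
    _ ≤ 1/n + 1/n + 1/n :=
        add_le_add (add_le_add (le_trans lg hclose) lgg) (le_trans lh habs)


lemma core (ε : ℝ) (hε : 0 < ε) : ∃ F : Set HomeoPlus, F.Finite ∧ ∀ g : HomeoPlus,
    ∃ f ∈ F, ∃ a b : HomeoPlus, g = a * f * b ∧
      (∀ y, |((a.1 y : unitInterval) : ℝ) - (y:ℝ)| < ε) ∧
      (∀ x, |((b.1 x : unitInterval) : ℝ) - (x:ℝ)| < ε) := by
  classical
  obtain ⟨n, hn⟩ := exists_nat_gt (3 / ε)
  have hn0 : 0 < n := by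
    by_contra hcon
    push_neg at hcon
    interval_cases n
    simp at hn
    have : 0 < 3 / ε := by positivity
    linarith
  have hnR : (0:ℝ) < n := by exact_mod_cast hn0
  have hδε : 3 / (n:ℝ) < ε := by
    rw [div_lt_iff₀ hnR]
    rw [div_lt_iff₀ hε] at hn
    linarith
  set rep : (Fin (2*n+1) → Fin (n+1)) → HomeoPlus := fun p =>
    if h : ∃ g : HomeoPlus, pat n hn0 g = p then h.choose else 1 with hrep
  refine ⟨Set.range rep, Set.finite_range rep, ?_⟩
  intro g
  have hex : ∃ g' : HomeoPlus, pat n hn0 g' = pat n hn0 g := ⟨g, rfl⟩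
  set f : HomeoPlus := rep (pat n hn0 g) with hf
  have hfpat : pat n hn0 f = pat n hn0 g := by
    rw [hf, hrep]
    simp only [dif_pos hex]
    exact hex.choose_spec
  have hclose := close_of_pat_eq hn0 g f (hfpat.symm ▸ rfl)
  obtain ⟨a, b, hgab, ha, hb⟩ := decomp g f (3 / n) hclose
  exact ⟨f, Set.mem_range_self _, a, b, hgab,
    fun y => lt_of_le_of_lt (ha y) hδε, fun x => lt_of_le_of_lt (hb x) hδε⟩


end

def j : HomeoPlus → C(unitInterval, unitInterval) :=
  fun g => ⟨⇑g.1, g.1.continuous⟩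

lemma j_continuous : Continuous j := continuous_induced_dom

lemma j_mul (u v : HomeoPlus) : j (u * v) = (j u).comp (j v) := rfl

lemma j_one : j 1 = ContinuousMap.id _ := rfl

lemma mul_left_continuous (u : HomeoPlus) : Continuous (fun v : HomeoPlus => u * v) := by
  rw [continuous_induced_rng]
  have : (fun v : HomeoPlus => j (u * v)) = (fun f => (j u).comp f) ∘ j := by
    funext v; exact j_mul u v
  show Continuous fun v => j (u * v)
  rw [this]
  exact ((j u).continuous_postcomp).comp j_continuous

lemma mul_right_continuous (u : HomeoPlus) : Continuous (fun v : HomeoPlus => v * u) := by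
  rw [continuous_induced_rng]
  have : (fun v : HomeoPlus => j (v * u)) = (fun f : C(unitInterval, unitInterval) => f.comp (j u)) ∘ j := by
    funext v; exact j_mul v u
  show Continuous fun v => j (v * u)
  rw [this]
  exact (ContinuousMap.continuous_precomp (j u)).comp j_continuous


end StmtAux

open Pointwise in
/-- `Homeo⁺[0,1]` with the topology of uniform convergence is Roelcke-precompact:
every nonempty open `U` admits a finite `F` with `U * F * U` everything. -/
theorem stmt_9 :
    ∀ U : Set HomeoPlus, U.Nonempty → IsOpen U →
      ∃ F : Set HomeoPlus, F.Finite ∧ U * F * U = Set.univ := by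
  intro U hUne hUopen
  obtain ⟨u, hu⟩ := hUne
  classical
  -- the two translated neighborhoods of 1
  set V : Set HomeoPlus := (fun v => u * v) ⁻¹' U with hV
  set V' : Set HomeoPlus := (fun v => v * u) ⁻¹' U with hV'
  have hVopen : IsOpen V := hUopen.preimage (StmtAux.mul_left_continuous u)
  have hV'open : IsOpen V' := hUopen.preimage (StmtAux.mul_right_continuous u)
  have hV1 : (1 : HomeoPlus) ∈ V := by simp [hV, hu]
  have hV'1 : (1 : HomeoPlus) ∈ V' := by simp [hV', hu]
  -- extract a ball
  have hmem : V ∩ V' ∈ nhds (1 : HomeoPlus) := by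
    exact Filter.inter_mem (hVopen.mem_nhds hV1) (hV'open.mem_nhds hV'1)
  rw [nhds_induced] at hmem
  obtain ⟨O, hO, hOsub⟩ := hmem
  obtain ⟨ε, hε, hball⟩ := Metric.mem_nhds_iff.mp hO
  have hballsub : ∀ v : HomeoPlus,
      (∀ x : unitInterval, |((v.1 x : unitInterval) : ℝ) - (x:ℝ)| < ε/2) → v ∈ V ∩ V' := by
    intro v hv
    apply hOsub
    apply hball
    rw [Metric.mem_ball]
    show dist (StmtAux.j v) (StmtAux.j 1) < ε
    have : dist (StmtAux.j v) (StmtAux.j 1) ≤ ε/2 := by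
      rw [ContinuousMap.dist_le (by positivity)]
      intro x
      have := hv x
      rw [Subtype.dist_eq, Real.dist_eq]
      exact le_of_lt this
    exact lt_of_le_of_lt this (by linarith)
  -- apply the core lemma
  obtain ⟨F', hF'fin, hF'⟩ := StmtAux.core (ε/2) (by positivity)
  refine ⟨(fun f => u⁻¹ * f * u⁻¹) '' F', hF'fin.image _, ?_⟩
  apply Set.eq_univ_of_forall
  intro g
  obtain ⟨f, hf, a, b, hgab, ha, hb⟩ := hF' g
  have haV : a ∈ V ∩ V' := hballsub a ha
  have hbV : b ∈ V ∩ V' := hballsub b hb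
  have hau : a * u ∈ U := haV.2
  have hub : u * b ∈ U := hbV.1
  have heq : g = (a * u) * (u⁻¹ * f * u⁻¹) * (u * b) := by
    rw [hgab]; group
  rw [heq]
  exact Set.mul_mem_mul (Set.mul_mem_mul hau (Set.mem_image_of_mem _ hf)) hub
end
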